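/- arXiv:1904.12660 — 6 statements merged into one kernel-verified Lean document; each statement's English description precedes it below -/
import Mathlib

section
/- Let p_1, …, p_n ∈ ℂ with Re p_k > 0 for all k, let v ∈ ℂ^m be a unit vector, and let s ∈ ℂ with s ≠ −conj(p_k) for all k. Then the product of the rank-one matrix Blaschke factors all having the same direction v satisfies ∏_{k=1}^n (I − (2 Re p_k / (s + conj(p_k))) v v^H) = I + (∏_{k=1}^n ((s − p_k)/(s + conj(p_k))) − 1) v v^H. (Product formula for Blaschke factors with parallel pole directions, underlying Corollary 3(a).) -/
open Matrix

private lemma one_add_smul_mul {m : ℕ} (P : Matrix (Fin m) (Fin m) ℂ) (hP : P * P = P)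
    (x y : ℂ) :
    ((1 : Matrix (Fin m) (Fin m) ℂ) + x • P) * (1 + y • P)
      = 1 + (x + y + x * y) • P := by
  simp only [mul_add, add_mul, one_mul, mul_one, smul_mul_assoc, mul_smul_comm, smul_smul, hP,
    add_smul]
  module

private lemma prod_one_add_smul {m : ℕ} (P : Matrix (Fin m) (Fin m) ℂ) (hP : P * P = P) :
    ∀ {n : ℕ} (a : Fin n → ℂ),
      (List.ofFn (fun k => (1 : Matrix (Fin m) (Fin m) ℂ) + (a k - 1) • P)).prod
        = 1 + ((∏ k, a k) - 1) • P := by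
  intro n
  induction n with
  | zero => intro a; simp
  | succ n ih =>
    intro a
    rw [List.ofFn_succ, List.prod_cons, ih (fun i => a i.succ),
      one_add_smul_mul P hP, Fin.prod_univ_succ]
    ring_nf

/-- Product formula for rank-one matrix Blaschke factors with a common (parallel)
direction `v`:
`∏_{k} (I - (2 Re p_k/(s + conj p_k)) v vᴴ) = I + (∏_k (s - p_k)/(s + conj p_k) - 1) v vᴴ`. -/
theorem blaschke_product_parallel_directions
    (m n : ℕ) (p : Fin n → ℂ) (hp : ∀ k, 0 < (p k).re)
    (v : Fin m → ℂ) (hv : ∑ i, starRingEnd ℂ (v i) * v i = 1)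
    (s : ℂ) (hs : ∀ k, s ≠ -starRingEnd ℂ (p k)) :
    (List.ofFn (fun k : Fin n =>
        (1 : Matrix (Fin m) (Fin m) ℂ) -
          ((2 * (p k).re : ℂ) / (s + starRingEnd ℂ (p k))) •
            Matrix.vecMulVec v (fun i => starRingEnd ℂ (v i)))).prod
      = 1 + ((∏ k, (s - p k) / (s + starRingEnd ℂ (p k))) - 1) •
          Matrix.vecMulVec v (fun i => starRingEnd ℂ (v i)) := by
  set P := Matrix.vecMulVec v (fun i => starRingEnd ℂ (v i)) with hPdef
  have hP : P * P = P := by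
    ext i j
    simp only [hPdef, Matrix.mul_apply, Matrix.vecMulVec_apply]
    calc ∑ x, (v i * starRingEnd ℂ (v x)) * (v x * starRingEnd ℂ (v j))
        = (v i * starRingEnd ℂ (v j)) * ∑ x, starRingEnd ℂ (v x) * v x := by
          rw [Finset.mul_sum]; exact Finset.sum_congr rfl fun x _ => by ring
      _ = v i * starRingEnd ℂ (v j) := by rw [hv, mul_one]
  have hden : ∀ k, s + starRingEnd ℂ (p k) ≠ 0 := by
    intro k h
    exact hs k (by linear_combination h)
  have hfac : ∀ k : Fin n,
      (1 : Matrix (Fin m) (Fin m) ℂ) -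
          ((2 * (p k).re : ℂ) / (s + starRingEnd ℂ (p k))) • P
        = 1 + ((s - p k) / (s + starRingEnd ℂ (p k)) - 1) • P := by
    intro k
    have : (s - p k) / (s + starRingEnd ℂ (p k)) - 1
        = -((2 * (p k).re : ℂ) / (s + starRingEnd ℂ (p k))) := by
      rw [div_sub_one (hden k), ← neg_div]
      congr 1
      push_cast
      linear_combination (norm := (push_cast; ring)) -(Complex.add_conj (p k))
    rw [this, neg_smul, ← sub_eq_add_neg]
  calc (List.ofFn (fun k : Fin n =>
        (1 : Matrix (Fin m) (Fin m) ℂ) -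
          ((2 * (p k).re : ℂ) / (s + starRingEnd ℂ (p k))) • P)).prod
      = (List.ofFn (fun k : Fin n =>
        (1 : Matrix (Fin m) (Fin m) ℂ) +
          ((s - p k) / (s + starRingEnd ℂ (p k)) - 1) • P)).prod := by
        simp only [hfac]
    _ = 1 + ((∏ k, (s - p k) / (s + starRingEnd ℂ (p k))) - 1) • P :=
        prod_one_add_smul P hP _
end

section
/- Let f and g be rational functions with complex coefficients, both strictly proper (numerator degree strictly less than denominator degree), such that every pole of f has strictly negative real part and every pole of g has strictly positive real part. Then ∫_{−∞}^{∞} conj(f(iω)) · g(iω) dω = 0. (Orthogonality of the stable subspace H₂ and the antistable subspace H₂^⊥ of L₂ of the imaginary axis, for rational functions.) -/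
open Polynomial Complex MeasureTheory Filter intervalIntegral Set

private lemma poly_upper (P : Polynomial ℂ) (m : ℕ) (hm : P.natDegree ≤ m) :
    ∃ C : ℝ, 0 ≤ C ∧ ∀ s : ℂ, 1 ≤ ‖s‖ → ‖P.eval s‖ ≤ C * ‖s‖ ^ m := by
  refine ⟨∑ i ∈ Finset.range (P.natDegree + 1), ‖P.coeff i‖,
    Finset.sum_nonneg fun _ _ => norm_nonneg _, fun s hs => ?_⟩
  rw [Polynomial.eval_eq_sum_range, Finset.sum_mul]
  refine (norm_sum_le _ _).trans (Finset.sum_le_sum fun i hi => ?_)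
  rw [norm_mul, norm_pow]
  have h1 : i ≤ m := le_trans (Nat.lt_succ_iff.mp (Finset.mem_range.mp hi)) hm
  exact mul_le_mul_of_nonneg_left (pow_le_pow_right₀ hs h1) (norm_nonneg _)

private lemma poly_lower (Q : Polynomial ℂ) (hQ : Q ≠ 0) :
    ∃ c : ℝ, 0 < c ∧ ∃ R₀ : ℝ, 1 ≤ R₀ ∧
      ∀ s : ℂ, R₀ ≤ ‖s‖ → c * ‖s‖ ^ Q.natDegree ≤ ‖Q.eval s‖ := by
  rcases Nat.eq_zero_or_pos Q.natDegree with h0 | hpos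
  · have hC : Q = Polynomial.C (Q.coeff 0) := Polynomial.eq_C_of_natDegree_eq_zero h0
    have hc0 : Q.coeff 0 ≠ 0 := by
      intro h; apply hQ; rw [hC, h, map_zero]
    refine ⟨‖Q.coeff 0‖, norm_pos_iff.mpr hc0, 1, le_refl 1, fun s hs => ?_⟩
    rw [h0, pow_zero, mul_one]
    conv_rhs => rw [hC]
    simp
  · set n := Q.natDegree with hn
    have ha : Q.leadingCoeff ≠ 0 := Polynomial.leadingCoeff_ne_zero.mpr hQ
    have hapos : (0:ℝ) < ‖Q.leadingCoeff‖ := norm_pos_iff.mpr ha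
    obtain ⟨B, hB0, hB⟩ := poly_upper Q.eraseLead (n - 1) Q.eraseLead_natDegree_le
    refine ⟨‖Q.leadingCoeff‖ / 2, by positivity, max 1 (2 * B / ‖Q.leadingCoeff‖),
      le_max_left _ _, fun s hs => ?_⟩
    have hs1 : (1:ℝ) ≤ ‖s‖ := le_trans (le_max_left _ _) hs
    have hs2 : 2 * B / ‖Q.leadingCoeff‖ ≤ ‖s‖ := le_trans (le_max_right _ _) hs
    have hs2' : 2 * B ≤ ‖Q.leadingCoeff‖ * ‖s‖ := by
      rw [div_le_iff₀ hapos] at hs2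
      linarith [hs2, mul_comm ‖Q.leadingCoeff‖ ‖s‖]
    have heq : Q.eval s = Q.eraseLead.eval s + Q.leadingCoeff * s ^ n := by
      conv_lhs => rw [← Q.eraseLead_add_C_mul_X_pow]
      rw [Polynomial.eval_add, Polynomial.eval_mul, Polynomial.eval_C,
        Polynomial.eval_pow, Polynomial.eval_X]
    have h1 : ‖Q.leadingCoeff * s ^ n‖ - ‖Q.eraseLead.eval s‖ ≤ ‖Q.eval s‖ := by
      have h := norm_sub_norm_le (Q.leadingCoeff * s ^ n) (-(Q.eraseLead.eval s))
      simp only [norm_neg, sub_neg_eq_add] at h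
      rw [heq, add_comm]
      exact h
    have h2 : ‖Q.eraseLead.eval s‖ ≤ B * ‖s‖ ^ (n - 1) := hB s hs1
    rw [norm_mul, norm_pow] at h1
    have hpow : ‖s‖ ^ n = ‖s‖ ^ (n - 1) * ‖s‖ := by
      rw [← pow_succ]; congr 1; omega
    have hx : (0:ℝ) ≤ ‖s‖ ^ (n - 1) := by positivity
    rw [hpow] at h1 ⊢
    nlinarith [mul_le_mul_of_nonneg_right hs2' hx]

private lemma rat_decay (P Q : Polynomial ℂ) (hQ : Q ≠ 0)
    (hd : P.natDegree + 2 ≤ Q.natDegree) :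
    ∃ C R₀ : ℝ, 0 ≤ C ∧ 1 ≤ R₀ ∧
      ∀ s : ℂ, R₀ ≤ ‖s‖ → ‖P.eval s / Q.eval s‖ ≤ C / ‖s‖ ^ 2 := by
  obtain ⟨C₁, hC₁, hup⟩ := poly_upper P P.natDegree le_rfl
  obtain ⟨c, hc, R₁, hR₁, hlo⟩ := poly_lower Q hQ
  refine ⟨C₁ / c, R₁, by positivity, hR₁, fun s hs => ?_⟩
  have hs1 : (1:ℝ) ≤ ‖s‖ := le_trans hR₁ hs
  have hs0 : (0:ℝ) < ‖s‖ := lt_of_lt_of_le one_pos hs1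
  have hQpos : (0:ℝ) < ‖Q.eval s‖ := lt_of_lt_of_le (by positivity) (hlo s hs)
  rw [norm_div, div_le_div_iff₀ hQpos (by positivity)]
  calc ‖P.eval s‖ * ‖s‖ ^ 2 ≤ (C₁ * ‖s‖ ^ P.natDegree) * ‖s‖ ^ 2 :=
        mul_le_mul_of_nonneg_right (hup s hs1) (by positivity)
    _ = C₁ * ‖s‖ ^ (P.natDegree + 2) := by rw [mul_assoc, ← pow_add]
    _ ≤ C₁ * ‖s‖ ^ Q.natDegree :=
        mul_le_mul_of_nonneg_left (pow_le_pow_right₀ hs1 hd) hC₁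
    _ = (C₁ / c) * (c * ‖s‖ ^ Q.natDegree) := by field_simp
    _ ≤ (C₁ / c) * ‖Q.eval s‖ :=
        mul_le_mul_of_nonneg_left (hlo s hs) (by positivity)

private lemma conj_eval (p : Polynomial ℂ) (z : ℂ) :
    (p.map (starRingEnd ℂ)).eval z = starRingEnd ℂ (p.eval (starRingEnd ℂ z)) := by
  rw [Polynomial.eval_map]
  have := Polynomial.eval₂_at_apply (starRingEnd ℂ) (p := p) (starRingEnd ℂ z)
  simpa using this

private lemma rect_bound (u : ℂ → ℂ) (C R₀ : ℝ) (hC : 0 ≤ C)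
    (hdiff : ∀ s : ℂ, s.re ≤ 0 → DifferentiableAt ℂ u s)
    (hdec : ∀ s : ℂ, R₀ ≤ ‖s‖ → ‖u s‖ ≤ C / ‖s‖ ^ 2)
    (R : ℝ) (hR : max R₀ 1 ≤ R) :
    ‖∫ ω in (-R)..R, u (Complex.I * ω)‖ ≤ 4 * C / R := by
  have hR1 : 1 ≤ R := le_trans (le_max_right _ _) hR
  have hRR : R₀ ≤ R := le_trans (le_max_left _ _) hR
  have hR0 : 0 < R := lt_of_lt_of_le one_pos hR1
  have hdOn : DifferentiableOn ℂ u (Set.uIcc (-R:ℝ) 0 ×ℂ Set.uIcc (-R:ℝ) R) := by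
    intro s hs
    have hsre : s.re ∈ Set.uIcc (-R:ℝ) 0 := hs.1
    rw [Set.uIcc_of_le (by linarith : (-R:ℝ) ≤ 0)] at hsre
    exact (hdiff s hsre.2).differentiableWithinAt
  have key : (∫ x in (-R:ℝ)..(0:ℝ), u (x + ((-R:ℝ):ℂ) * I)) -
      (∫ x in (-R:ℝ)..(0:ℝ), u (x + ((R:ℝ):ℂ) * I)) +
      I • (∫ y in (-R:ℝ)..(R:ℝ), u (((0:ℝ):ℂ) + y * I)) -
      I • (∫ y in (-R:ℝ)..(R:ℝ), u (((-R:ℝ):ℂ) + y * I)) = 0 :=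
    Complex.integral_boundary_rect_eq_zero_of_differentiableOn u ⟨-R, -R⟩ ⟨0, R⟩ hdOn
  have e0 : ∀ y : ℝ, (((0:ℝ):ℂ) + (y:ℂ) * I) = Complex.I * y := by
    intro y; push_cast; ring
  simp only [e0, smul_eq_mul] at key
  have keq : I * (∫ y in (-R:ℝ)..(R:ℝ), u (Complex.I * y)) =
      (∫ x in (-R:ℝ)..(0:ℝ), u (x + ((R:ℝ):ℂ) * I)) -
      (∫ x in (-R:ℝ)..(0:ℝ), u (x + ((-R:ℝ):ℂ) * I)) +
      I * (∫ y in (-R:ℝ)..(R:ℝ), u (((-R:ℝ):ℂ) + y * I)) := by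
    linear_combination key
  -- bound helper
  have hb : ∀ s : ℂ, R ≤ ‖s‖ → ‖u s‖ ≤ C / R ^ 2 := by
    intro s hs
    refine (hdec s (le_trans hRR hs)).trans ?_
    gcongr
  have hB : ‖∫ x in (-R:ℝ)..(0:ℝ), u (x + ((-R:ℝ):ℂ) * I)‖ ≤ C / R ^ 2 * |0 - (-R)| := by
    apply intervalIntegral.norm_integral_le_of_norm_le_const
    intro x hx
    apply hb
    calc R = |((x:ℂ) + ((-R:ℝ):ℂ) * I).im| := by simp [abs_of_pos hR0]
      _ ≤ ‖(x:ℂ) + ((-R:ℝ):ℂ) * I‖ := Complex.abs_im_le_norm _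
  have hT : ‖∫ x in (-R:ℝ)..(0:ℝ), u (x + ((R:ℝ):ℂ) * I)‖ ≤ C / R ^ 2 * |0 - (-R)| := by
    apply intervalIntegral.norm_integral_le_of_norm_le_const
    intro x hx
    apply hb
    calc R = |((x:ℂ) + ((R:ℝ):ℂ) * I).im| := by simp [abs_of_pos hR0]
      _ ≤ ‖(x:ℂ) + ((R:ℝ):ℂ) * I‖ := Complex.abs_im_le_norm _
  have hL : ‖∫ y in (-R:ℝ)..(R:ℝ), u (((-R:ℝ):ℂ) + y * I)‖ ≤ C / R ^ 2 * |R - (-R)| := by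
    apply intervalIntegral.norm_integral_le_of_norm_le_const
    intro y hy
    apply hb
    calc R = |(((-R:ℝ):ℂ) + (y:ℂ) * I).re| := by simp [abs_of_pos hR0]
      _ ≤ ‖((-R:ℝ):ℂ) + (y:ℂ) * I‖ := Complex.abs_re_le_norm _
  have hnorm : ‖∫ y in (-R:ℝ)..(R:ℝ), u (Complex.I * y)‖ =
      ‖I * (∫ y in (-R:ℝ)..(R:ℝ), u (Complex.I * y))‖ := by
    rw [norm_mul, Complex.norm_I, one_mul]
  rw [hnorm, keq]
  have habs1 : |(0:ℝ) - (-R)| = R := by rw [abs_of_pos (by linarith)]; ring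
  have habs2 : |R - (-R)| = 2 * R := by rw [abs_of_pos (by linarith)]; ring
  rw [habs1] at hB hT
  rw [habs2] at hL
  calc ‖(∫ x in (-R:ℝ)..(0:ℝ), u (x + ((R:ℝ):ℂ) * I)) -
      (∫ x in (-R:ℝ)..(0:ℝ), u (x + ((-R:ℝ):ℂ) * I)) +
      I * (∫ y in (-R:ℝ)..(R:ℝ), u (((-R:ℝ):ℂ) + y * I))‖
      ≤ ‖(∫ x in (-R:ℝ)..(0:ℝ), u (x + ((R:ℝ):ℂ) * I)) -
      (∫ x in (-R:ℝ)..(0:ℝ), u (x + ((-R:ℝ):ℂ) * I))‖ +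
      ‖I * (∫ y in (-R:ℝ)..(R:ℝ), u (((-R:ℝ):ℂ) + y * I))‖ := norm_add_le _ _
    _ ≤ (‖(∫ x in (-R:ℝ)..(0:ℝ), u (x + ((R:ℝ):ℂ) * I))‖ +
      ‖(∫ x in (-R:ℝ)..(0:ℝ), u (x + ((-R:ℝ):ℂ) * I))‖) +
      ‖(∫ y in (-R:ℝ)..(R:ℝ), u (((-R:ℝ):ℂ) + y * I))‖ := by
        rw [norm_mul, Complex.norm_I, one_mul]
        exact add_le_add_left (norm_sub_le _ _) _
    _ ≤ (C / R ^ 2 * R + C / R ^ 2 * R) + C / R ^ 2 * (2 * R) := by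
        exact add_le_add (add_le_add hT hB) hL
    _ = 4 * C / R := by field_simp; ring


/-- Orthogonality of the stable and antistable subspaces of `L²` of the imaginary
axis, for strictly proper rational functions: if every pole of `f` has negative real
part and every pole of `g` has positive real part, then
`∫ conj(f(iω)) g(iω) dω = 0`. -/
theorem stable_antistable_orthogonality
    (f g : RatFunc ℂ)
    (hf_sp : f.num.degree < f.denom.degree)
    (hg_sp : g.num.degree < g.denom.degree)
    (hf_poles : ∀ x : ℂ, Polynomial.eval x f.denom = 0 → x.re < 0)
    (hg_poles : ∀ x : ℂ, Polynomial.eval x g.denom = 0 → 0 < x.re) :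
    ∫ ω : ℝ, starRingEnd ℂ (RatFunc.eval (RingHom.id ℂ) (Complex.I * (ω : ℂ)) f) *
        RatFunc.eval (RingHom.id ℂ) (Complex.I * (ω : ℂ)) g = 0 := by
  by_cases hf0 : f = 0
  · simp [hf0, RatFunc.eval_zero]
  by_cases hg0 : g = 0
  · simp [hg0, RatFunc.eval_zero]
  have hfn : f.num ≠ 0 := RatFunc.num_ne_zero hf0
  have hgn : g.num ≠ 0 := RatFunc.num_ne_zero hg0
  set P : Polynomial ℂ := (f.num.map (starRingEnd ℂ)).comp (-X) * g.num with hPdef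
  set Q : Polynomial ℂ := (f.denom.map (starRingEnd ℂ)).comp (-X) * g.denom with hQdef
  set u : ℂ → ℂ := fun s => P.eval s / Q.eval s with hudef
  -- Q does not vanish on the closed left half plane
  have hQne : ∀ s : ℂ, s.re ≤ 0 → Q.eval s ≠ 0 := by
    intro s hs
    rw [hQdef, Polynomial.eval_mul, Polynomial.eval_comp, Polynomial.eval_neg,
      Polynomial.eval_X]
    apply mul_ne_zero
    · rw [conj_eval]
      intro h
      have h2 : f.denom.eval (starRingEnd ℂ (-s)) = 0 := by
        have := map_eq_zero_iff (starRingEnd ℂ) (RingHom.injective _) |>.mp h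
        exact this
      have h3 := hf_poles _ h2
      simp only [map_neg, Complex.neg_re, Complex.conj_re] at h3
      linarith
    · intro h
      have := hg_poles s h
      linarith
  have hQn : Q ≠ 0 := fun h => hQne 0 (by simp) (by rw [h, Polynomial.eval_zero])
  -- degree bookkeeping
  have hcompne : ∀ p : Polynomial ℂ, p ≠ 0 → p.comp (-X) ≠ 0 := by
    intro p hp h
    apply hp
    have := congrArg (fun q => q.comp (-X : Polynomial ℂ)) h
    simpa [Polynomial.comp_assoc] using this
  have hmapfn : f.num.map (starRingEnd ℂ) ≠ 0 :=
    (Polynomial.map_ne_zero_iff (RingHom.injective _)).mpr hfn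
  have hfna : (f.num.map (starRingEnd ℂ)).comp (-X) ≠ 0 := hcompne _ hmapfn
  have hPn : P ≠ 0 := mul_ne_zero hfna hgn
  have hmapfd : f.denom.map (starRingEnd ℂ) ≠ 0 :=
    (Polynomial.map_ne_zero_iff (RingHom.injective _)).mpr f.denom_ne_zero
  have hfda : (f.denom.map (starRingEnd ℂ)).comp (-X) ≠ 0 := hcompne _ hmapfd
  have hPdeg : P.natDegree = f.num.natDegree + g.num.natDegree := by
    rw [hPdef, Polynomial.natDegree_mul hfna hgn, Polynomial.natDegree_comp]
    simp [Polynomial.natDegree_map_eq_of_injective (RingHom.injective (starRingEnd ℂ))]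
  have hQdeg : Q.natDegree = f.denom.natDegree + g.denom.natDegree := by
    rw [hQdef, Polynomial.natDegree_mul hfda g.denom_ne_zero, Polynomial.natDegree_comp]
    simp [Polynomial.natDegree_map_eq_of_injective (RingHom.injective (starRingEnd ℂ))]
  have hdeg2 : P.natDegree + 2 ≤ Q.natDegree := by
    have h1 : f.num.natDegree < f.denom.natDegree :=
      Polynomial.natDegree_lt_natDegree hfn hf_sp
    have h2 : g.num.natDegree < g.denom.natDegree :=
      Polynomial.natDegree_lt_natDegree hgn hg_sp
    rw [hPdeg, hQdeg]; omega
  -- decay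
  obtain ⟨C, R₀, hC, hR₀, hdec⟩ := rat_decay P Q hQn hdeg2
  -- differentiability
  have hdiff : ∀ s : ℂ, s.re ≤ 0 → DifferentiableAt ℂ u s := by
    intro s hs
    exact (P.differentiableAt).div (Q.differentiableAt) (hQne s hs)
  -- pointwise identification with the integrand
  have hpt : ∀ ω : ℝ,
      starRingEnd ℂ (RatFunc.eval (RingHom.id ℂ) (Complex.I * (ω : ℂ)) f) *
        RatFunc.eval (RingHom.id ℂ) (Complex.I * (ω : ℂ)) g = u (Complex.I * ω) := by
    intro ω
    have e1 : RatFunc.eval (RingHom.id ℂ) (Complex.I * (ω : ℂ)) f =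
        f.num.eval (Complex.I * ω) / f.denom.eval (Complex.I * ω) := rfl
    have e2 : RatFunc.eval (RingHom.id ℂ) (Complex.I * (ω : ℂ)) g =
        g.num.eval (Complex.I * ω) / g.denom.eval (Complex.I * ω) := rfl
    rw [e1, e2, map_div₀, hudef]
    simp only [hPdef, hQdef, Polynomial.eval_mul, Polynomial.eval_comp,
      Polynomial.eval_neg, Polynomial.eval_X, conj_eval]
    have hc : starRingEnd ℂ (-(Complex.I * (ω:ℂ))) = Complex.I * ω := by
      simp [map_mul]
    rw [hc, div_mul_div_comm]
  -- continuity on the imaginary axis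
  have hcont : Continuous fun ω : ℝ => u (Complex.I * ω) := by
    rw [hudef]
    apply Continuous.div
    · exact P.continuous.comp (continuous_const.mul Complex.continuous_ofReal)
    · exact Q.continuous.comp (continuous_const.mul Complex.continuous_ofReal)
    · intro ω
      exact hQne _ (by simp)
  -- integrability
  obtain ⟨M, hM⟩ := (isCompact_Icc (a := -R₀) (b := R₀)).exists_bound_of_continuousOn
    hcont.continuousOn
  have hM0 : 0 ≤ M :=
    le_trans (norm_nonneg _) (hM 0 ⟨by linarith, by linarith⟩)
  set K : ℝ := max (2 * C) (M * (1 + R₀ ^ 2)) with hKdef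
  have hbound : ∀ ω : ℝ, ‖u (Complex.I * ω)‖ ≤ K * (1 / (1 + ω ^ 2)) := by
    intro ω
    have hden : (0:ℝ) < 1 + ω ^ 2 := by positivity
    rcases le_or_gt |ω| R₀ with h | h
    · have h1 : ‖u (Complex.I * ω)‖ ≤ M := hM ω (abs_le.mp h |>.imp id id |> fun ⟨a, b⟩ => ⟨a, b⟩)
      refine h1.trans ?_
      rw [mul_one_div, le_div_iff₀ hden]
      have hω2 : ω ^ 2 ≤ R₀ ^ 2 := by
        rw [← _root_.sq_abs ω]
        exact pow_le_pow_left₀ (abs_nonneg _) h 2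
      calc M * (1 + ω ^ 2) ≤ M * (1 + R₀ ^ 2) :=
            mul_le_mul_of_nonneg_left (by linarith) hM0
        _ ≤ K := le_max_right _ _
    · have hnr : ‖Complex.I * (ω:ℂ)‖ = |ω| := by
        rw [norm_mul, Complex.norm_I, one_mul, Complex.norm_real, Real.norm_eq_abs]
      have h1 := hdec (Complex.I * ω) (by rw [hnr]; exact h.le)
      rw [hnr] at h1
      have hω1 : (1:ℝ) ≤ |ω| := le_trans hR₀ h.le
      have hω2 : (1:ℝ) ≤ ω ^ 2 := by
        rw [← _root_.sq_abs ω]; nlinarith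
      refine h1.trans ?_
      rw [_root_.sq_abs, mul_one_div, div_le_div_iff₀ (by nlinarith) hden]
      have h2C : 2 * C ≤ K := le_max_left _ _
      nlinarith
  have hKint : Integrable fun ω : ℝ => K * (1 / (1 + ω ^ 2)) :=
    by
    have := integrable_inv_one_add_sq.const_mul K
    simpa [one_div] using this
  have hint : Integrable fun ω : ℝ => u (Complex.I * ω) :=
    hKint.mono' hcont.aestronglyMeasurable (ae_of_all _ hbound)
  -- two limits
  have hT1 : Tendsto (fun R : ℝ => ∫ ω in (-R)..R, u (Complex.I * ω)) atTop
      (nhds (∫ ω : ℝ, u (Complex.I * ω))) :=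
    intervalIntegral_tendsto_integral hint tendsto_neg_atTop_atBot tendsto_id
  have hT2 : Tendsto (fun R : ℝ => ∫ ω in (-R)..R, u (Complex.I * ω)) atTop (nhds 0) := by
    apply squeeze_zero_norm' (a := fun R : ℝ => 4 * C / R)
    · filter_upwards [eventually_ge_atTop (max R₀ 1)] with R hR
      exact rect_bound u C R₀ hC hdiff hdec R hR
    · exact Tendsto.div_atTop tendsto_const_nhds tendsto_id
  have hzero : (∫ ω : ℝ, u (Complex.I * ω)) = 0 := tendsto_nhds_unique hT1 hT2
  calc (∫ ω : ℝ, starRingEnd ℂ (RatFunc.eval (RingHom.id ℂ) (Complex.I * (ω : ℂ)) f) *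
        RatFunc.eval (RingHom.id ℂ) (Complex.I * (ω : ℂ)) g)
      = ∫ ω : ℝ, u (Complex.I * ω) := by
        congr 1
        funext ω
        exact hpt ω
    _ = 0 := hzero
end

section
/- Let z_1, …, z_n ∈ ℂ with Re z_k > 0 for all k, and write b_k(s) = (s − z_k)/(s + conj(z_k)). Then for all indices 1 ≤ i < j ≤ n, (1/(2π)) ∫_{−∞}^{∞} conj(1 − b_i(iω)) · (∏_{k=i}^{j−1} b_k(iω)) · (1 − b_j(iω)) dω = 0. (Mutual orthogonality of the terms in the telescoping expansion 1 − ∏_k b_k = Σ_j (1 − b_j) ∏_{k<j} b_k, used to evaluate the Blaschke product energy.) -/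
open Complex MeasureTheory Filter Topology intervalIntegral

lemma aux_denom_ne {s w : ℂ} (hs : 0 ≤ s.re) (hw : 0 < w.re) :
    s + (starRingEnd ℂ) w ≠ 0 := by
  intro h
  have h1 : (s + (starRingEnd ℂ) w).re = s.re + w.re := by simp
  rw [h] at h1
  simp at h1
  linarith

lemma aux_blaschke_le {s w : ℂ} (hs : 0 ≤ s.re) (hw : 0 < w.re) :
    ‖(s - w) / (s + (starRingEnd ℂ) w)‖ ≤ 1 := by
  rw [norm_div]
  have hd : 0 < ‖s + (starRingEnd ℂ) w‖ := by
    simpa [norm_pos_iff] using aux_denom_ne hs hw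
  rw [div_le_one hd]
  have h1 : Complex.normSq (s - w) ≤ Complex.normSq (s + (starRingEnd ℂ) w) := by
    simp only [Complex.normSq_apply, Complex.sub_re, Complex.sub_im, Complex.add_re,
      Complex.add_im, Complex.conj_re, Complex.conj_im]
    nlinarith [hs, hw.le, sq_nonneg (s.im - w.im)]
  have := Real.sqrt_le_sqrt h1
  simpa [Complex.norm_def] using this

lemma aux_integrable (x y : ℝ) (hx : 0 < x) :
    Integrable (fun ω : ℝ => 1 / (x ^ 2 + (ω - y) ^ 2)) := by
  have h0 : Integrable (fun ω : ℝ => 1 / (x ^ 2 + ω ^ 2)) := by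
    have h1 : Integrable (fun ω : ℝ => (1 + ω ^ 2)⁻¹) := integrable_inv_one_add_sq
    have h2 := (h1.comp_div (R := x) hx.ne').const_mul (x⁻¹ ^ 2)
    refine h2.congr (Eventually.of_forall fun ω => ?_)
    field_simp
  exact h0.comp_sub_right y


lemma aux_amgm {c d1 d2 : ℝ} (hc : 0 ≤ c) (h1 : 0 < d1) (h2 : 0 < d2) :
    4 * c / (d1 * d2) ≤ 2 * c * (1 / d1 ^ 2 + 1 / d2 ^ 2) := by
  have e : 1 / d1 ^ 2 + 1 / d2 ^ 2 = (d1 ^ 2 + d2 ^ 2) / (d1 ^ 2 * d2 ^ 2) := by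
    field_simp
    ring
  rw [e, ← mul_div_assoc, div_le_div_iff₀ (by positivity) (by positivity)]
  nlinarith [mul_nonneg (mul_nonneg hc (mul_pos h1 h2).le) (sq_nonneg (d1 - d2))]

/-- Mutual orthogonality of the terms in the telescoping expansion
`1 - ∏_k b_k = Σ_j (1 - b_j) ∏_{k<j} b_k` of a Blaschke product: for `i < j`,
`(1/(2π)) ∫ conj(1 - b_i(iω)) (∏_{k=i}^{j-1} b_k(iω)) (1 - b_j(iω)) dω = 0`. -/
theorem blaschke_telescoping_orthogonality
    (n : ℕ) (z : Fin n → ℂ) (hz : ∀ k, 0 < (z k).re)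
    (i j : Fin n) (hij : i < j) :
    (1 / (2 * Real.pi) : ℂ) *
        ∫ ω : ℝ,
          starRingEnd ℂ (1 - (Complex.I * (ω : ℂ) - z i) /
              (Complex.I * (ω : ℂ) + starRingEnd ℂ (z i))) *
            (∏ k ∈ Finset.Ico i j, (Complex.I * (ω : ℂ) - z k) /
              (Complex.I * (ω : ℂ) + starRingEnd ℂ (z k))) *
            (1 - (Complex.I * (ω : ℂ) - z j) /
              (Complex.I * (ω : ℂ) + starRingEnd ℂ (z j)))
      = 0 := by
  have hi : 0 < (z i).re := hz i
  have hj : 0 < (z j).re := hz j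
  set G : ℂ → ℂ := fun w =>
    -(2 * ((z i).re : ℂ)) / (I * w + (starRingEnd ℂ) (z i)) *
      (∏ k ∈ Finset.Ioo i j, (I * w - z k) / (I * w + (starRingEnd ℂ) (z k))) *
      (2 * ((z j).re : ℂ) / (I * w + (starRingEnd ℂ) (z j))) with hGdef
  -- denominators never vanish on the closed lower half plane
  have hden : ∀ w : ℂ, w.im ≤ 0 → ∀ k : Fin n, I * w + (starRingEnd ℂ) (z k) ≠ 0 := by
    intro w hw k
    exact aux_denom_ne (by simp [Complex.mul_re]; linarith) (hz k)
  -- pointwise identification of the integrand with G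
  have hpt : ∀ ω : ℝ,
      starRingEnd ℂ (1 - (Complex.I * (ω : ℂ) - z i) /
          (Complex.I * (ω : ℂ) + starRingEnd ℂ (z i))) *
        (∏ k ∈ Finset.Ico i j, (Complex.I * (ω : ℂ) - z k) /
          (Complex.I * (ω : ℂ) + starRingEnd ℂ (z k))) *
        (1 - (Complex.I * (ω : ℂ) - z j) /
          (Complex.I * (ω : ℂ) + starRingEnd ℂ (z j)))
      = G (ω : ℂ) := by
    intro ω
    have him : ((ω : ℂ)).im = 0 := by simp
    have h0 : (0:ℝ) ≤ 0 := le_refl 0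
    set s : ℂ := I * (ω : ℂ) with hs
    have hsa : s + (starRingEnd ℂ) (z i) ≠ 0 := hden _ (by simp) i
    have hsb : s + (starRingEnd ℂ) (z j) ≠ 0 := hden _ (by simp) j
    have hsma : s - z i ≠ 0 := by
      intro h
      have : (s - z i).re = -(z i).re := by simp [hs, Complex.mul_re]
      rw [h] at this
      simp at this
      linarith
    have hconjs : (starRingEnd ℂ) s = -s := by
      rw [hs, map_mul, Complex.conj_I, Complex.conj_ofReal]
      ring
    -- split off the i-th factor of the product
    rw [← Finset.Ioo_insert_left hij, Finset.prod_insert Finset.left_notMem_Ioo]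
    have h1 : starRingEnd ℂ (1 - (s - z i) / (s + (starRingEnd ℂ) (z i))) *
        ((s - z i) / (s + (starRingEnd ℂ) (z i)))
        = -(2 * ((z i).re : ℂ)) / (s + (starRingEnd ℂ) (z i)) := by
      rw [map_sub, map_one, map_div₀, map_sub, map_add, hconjs,
        Complex.conj_conj]
      have h2re : (2 * ((z i).re : ℂ)) = z i + (starRingEnd ℂ) (z i) := by
        rw [Complex.add_conj]; push_cast; ring
      have hne1 : -s + z i ≠ 0 := by
        intro h
        apply hsma
        have : s - z i = -(-s + z i) := by ring
        rw [this, h, neg_zero]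
      rw [h2re]
      field_simp
      ring
    have h2 : 1 - (s - z j) / (s + (starRingEnd ℂ) (z j))
        = 2 * ((z j).re : ℂ) / (s + (starRingEnd ℂ) (z j)) := by
      have h2re : (2 * ((z j).re : ℂ)) = z j + (starRingEnd ℂ) (z j) := by
        rw [Complex.add_conj]; push_cast; ring
      rw [h2re]
      field_simp
      ring
    calc starRingEnd ℂ (1 - (s - z i) / (s + (starRingEnd ℂ) (z i))) *
          ((s - z i) / (s + (starRingEnd ℂ) (z i)) *
            ∏ k ∈ Finset.Ioo i j, (s - z k) / (s + (starRingEnd ℂ) (z k))) *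
          (1 - (s - z j) / (s + (starRingEnd ℂ) (z j)))
        = (starRingEnd ℂ (1 - (s - z i) / (s + (starRingEnd ℂ) (z i))) *
            ((s - z i) / (s + (starRingEnd ℂ) (z i)))) *
          (∏ k ∈ Finset.Ioo i j, (s - z k) / (s + (starRingEnd ℂ) (z k))) *
          (1 - (s - z j) / (s + (starRingEnd ℂ) (z j))) := by ring
      _ = G (ω : ℂ) := by rw [h1, h2, hGdef]
  -- product of Blaschke factors has norm at most one on the lower half plane
  have hprod : ∀ w : ℂ, w.im ≤ 0 →
      ‖∏ k ∈ Finset.Ioo i j, (I * w - z k) / (I * w + (starRingEnd ℂ) (z k))‖ ≤ 1 := by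
    intro w hw
    rw [norm_prod]
    refine Finset.prod_le_one (fun k _ => norm_nonneg _) (fun k _ => ?_)
    exact aux_blaschke_le (by simp [Complex.mul_re]; linarith) (hz k)
  -- norm bound for G
  have hGnorm : ∀ w : ℂ, w.im ≤ 0 →
      ‖G w‖ ≤ 4 * (z i).re * (z j).re /
        (‖I * w + (starRingEnd ℂ) (z i)‖ * ‖I * w + (starRingEnd ℂ) (z j)‖) := by
    intro w hw
    have d1 : 0 < ‖I * w + (starRingEnd ℂ) (z i)‖ := norm_pos_iff.2 (hden w hw i)
    have d2 : 0 < ‖I * w + (starRingEnd ℂ) (z j)‖ := norm_pos_iff.2 (hden w hw j)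
    have hA : ‖-(2 * ((z i).re : ℂ)) / (I * w + (starRingEnd ℂ) (z i))‖
        = 2 * (z i).re / ‖I * w + (starRingEnd ℂ) (z i)‖ := by
      rw [norm_div, norm_neg]
      congr 1
      rw [norm_mul]
      simp [abs_of_pos hi]
    have hB : ‖2 * ((z j).re : ℂ) / (I * w + (starRingEnd ℂ) (z j))‖
        = 2 * (z j).re / ‖I * w + (starRingEnd ℂ) (z j)‖ := by
      rw [norm_div, norm_mul]
      simp [abs_of_pos hj]
    calc ‖G w‖ = 2 * (z i).re / ‖I * w + (starRingEnd ℂ) (z i)‖ *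
          ‖∏ k ∈ Finset.Ioo i j, (I * w - z k) / (I * w + (starRingEnd ℂ) (z k))‖ *
          (2 * (z j).re / ‖I * w + (starRingEnd ℂ) (z j)‖) := by
          simp only [hGdef, norm_mul]
          rw [hA, hB]
      _ ≤ 2 * (z i).re / ‖I * w + (starRingEnd ℂ) (z i)‖ * 1 *
          (2 * (z j).re / ‖I * w + (starRingEnd ℂ) (z j)‖) := by
          gcongr
          exact hprod w hw
      _ = 4 * (z i).re * (z j).re /
          (‖I * w + (starRingEnd ℂ) (z i)‖ * ‖I * w + (starRingEnd ℂ) (z j)‖) := by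
          field_simp
          ring
  -- lower bound on denominators
  have hlow : ∀ (w : ℂ) (k : Fin n), ‖w‖ - ‖z k‖ ≤ ‖I * w + (starRingEnd ℂ) (z k)‖ := by
    intro w k
    have h := norm_sub_norm_le (I * w) (-((starRingEnd ℂ) (z k)))
    rw [sub_neg_eq_add] at h
    simpa using h
  set M : ℝ := max ‖z i‖ ‖z j‖ with hM
  have hM0 : 0 ≤ M := le_trans (norm_nonneg _) (le_max_left _ _)
  -- key decay bound
  have hkey : ∀ R : ℝ, 2 * M + 2 ≤ R → ∀ w : ℂ, w.im ≤ 0 → R ≤ ‖w‖ →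
      ‖G w‖ ≤ 16 * ((z i).re * (z j).re) / R ^ 2 := by
    intro R hR w hw hRw
    have hRpos : 0 < R := by linarith
    have hd1 : R / 2 ≤ ‖I * w + (starRingEnd ℂ) (z i)‖ := by
      have := hlow w i
      have h2 : ‖z i‖ ≤ M := le_max_left _ _
      linarith
    have hd2 : R / 2 ≤ ‖I * w + (starRingEnd ℂ) (z j)‖ := by
      have := hlow w j
      have h2 : ‖z j‖ ≤ M := le_max_right _ _
      linarith
    calc ‖G w‖ ≤ 4 * (z i).re * (z j).re /
          (‖I * w + (starRingEnd ℂ) (z i)‖ * ‖I * w + (starRingEnd ℂ) (z j)‖) := hGnorm w hw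
      _ ≤ 4 * (z i).re * (z j).re / (R / 2 * (R / 2)) := by
          gcongr
      _ = 16 * ((z i).re * (z j).re) / R ^ 2 := by
          field_simp
          ring
  -- continuity of G on the real line
  have hcont : Continuous fun ω : ℝ => G (ω : ℂ) := by
    have hlin : ∀ c : ℂ, Continuous fun ω : ℝ => I * (ω : ℂ) + c := fun c =>
      (continuous_const.mul Complex.continuous_ofReal).add continuous_const
    simp only [hGdef]
    refine Continuous.mul (Continuous.mul ?_ ?_) ?_
    · exact continuous_const.div (hlin _) (fun ω => hden _ (by simp) i)
    · refine continuous_finset_prod _ (fun k _ => ?_)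
      exact ((continuous_const.mul Complex.continuous_ofReal).sub continuous_const).div
        (hlin _) (fun ω => hden _ (by simp) k)
    · exact continuous_const.div (hlin _) (fun ω => hden _ (by simp) j)
  -- integrability of G on the real line
  have hInt : Integrable (fun ω : ℝ => G (ω : ℂ)) := by
    have hmaj : Integrable (fun ω : ℝ => 2 * ((z i).re * (z j).re) *
        (1 / ((z i).re ^ 2 + (ω - (z i).im) ^ 2) +
          1 / ((z j).re ^ 2 + (ω - (z j).im) ^ 2))) :=
      ((aux_integrable _ _ hi).add (aux_integrable _ _ hj)).const_mul _
    refine hmaj.mono' hcont.aestronglyMeasurable (Eventually.of_forall fun ω => ?_)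
    have d1 : 0 < ‖I * (ω : ℂ) + (starRingEnd ℂ) (z i)‖ :=
      norm_pos_iff.2 (hden _ (by simp) i)
    have d2 : 0 < ‖I * (ω : ℂ) + (starRingEnd ℂ) (z j)‖ :=
      norm_pos_iff.2 (hden _ (by simp) j)
    have e1 : ‖I * (ω : ℂ) + (starRingEnd ℂ) (z i)‖ ^ 2
        = (z i).re ^ 2 + (ω - (z i).im) ^ 2 := by
      rw [Complex.sq_norm]
      simp only [Complex.normSq_apply, Complex.add_re, Complex.add_im, Complex.mul_re,
        Complex.mul_im, Complex.I_re, Complex.I_im, Complex.ofReal_re, Complex.ofReal_im,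
        Complex.conj_re, Complex.conj_im]
      ring
    have e2 : ‖I * (ω : ℂ) + (starRingEnd ℂ) (z j)‖ ^ 2
        = (z j).re ^ 2 + (ω - (z j).im) ^ 2 := by
      rw [Complex.sq_norm]
      simp only [Complex.normSq_apply, Complex.add_re, Complex.add_im, Complex.mul_re,
        Complex.mul_im, Complex.I_re, Complex.I_im, Complex.ofReal_re, Complex.ofReal_im,
        Complex.conj_re, Complex.conj_im]
      ring
    calc ‖G (ω : ℂ)‖ ≤ 4 * (z i).re * (z j).re /
          (‖I * (ω : ℂ) + (starRingEnd ℂ) (z i)‖ * ‖I * (ω : ℂ) + (starRingEnd ℂ) (z j)‖) :=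
            hGnorm _ (by simp)
      _ = 4 * ((z i).re * (z j).re) /
          (‖I * (ω : ℂ) + (starRingEnd ℂ) (z i)‖ * ‖I * (ω : ℂ) + (starRingEnd ℂ) (z j)‖) := by
            ring
      _ ≤ 2 * ((z i).re * (z j).re) *
          (1 / ‖I * (ω : ℂ) + (starRingEnd ℂ) (z i)‖ ^ 2 +
            1 / ‖I * (ω : ℂ) + (starRingEnd ℂ) (z j)‖ ^ 2) := aux_amgm (by positivity) d1 d2
      _ = 2 * ((z i).re * (z j).re) *
          (1 / ((z i).re ^ 2 + (ω - (z i).im) ^ 2) +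
            1 / ((z j).re ^ 2 + (ω - (z j).im) ^ 2)) := by rw [e1, e2]
  -- differentiability of G on lower-half-plane rectangles
  have hdiffon : ∀ R : ℝ, 0 ≤ R →
      DifferentiableOn ℂ G ((Set.uIcc (-R) R) ×ℂ (Set.uIcc (-R) (0:ℝ))) := by
    intro R hR w hw
    have hwim : w.im ≤ 0 := by
      rw [Complex.mem_reProdIm] at hw
      have h2 := hw.2
      rw [Set.uIcc_of_le (by linarith : -R ≤ (0:ℝ))] at h2
      exact h2.2
    refine DifferentiableAt.differentiableWithinAt ?_
    have hlin : ∀ c : ℂ, DifferentiableAt ℂ (fun w : ℂ => I * w + c) w :=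
      fun c => (differentiableAt_id.const_mul I).add_const c
    simp only [hGdef]
    refine DifferentiableAt.mul (DifferentiableAt.mul ?_ ?_) ?_
    · exact (differentiableAt_const _).div (hlin _) (hden w hwim i)
    · refine DifferentiableAt.fun_finsetProd (fun k _ => ?_)
      exact ((differentiableAt_id.const_mul I).sub_const _).div (hlin _) (hden w hwim k)
    · exact (differentiableAt_const _).div (hlin _) (hden w hwim j)
  -- rectangle contour identity
  have hrect : ∀ R : ℝ, 0 ≤ R →
      (∫ x : ℝ in (-R)..R, G x)
        = (∫ x : ℝ in (-R)..R, G (x + (-R : ℝ) * I))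
          + I • (∫ y : ℝ in (-R)..(0:ℝ), G (R + y * I))
          - I • (∫ y : ℝ in (-R)..(0:ℝ), G ((-R : ℝ) + y * I)) := by
    intro R hR
    have h := Complex.integral_boundary_rect_eq_zero_of_differentiableOn G
      (⟨-R, -R⟩ : ℂ) (⟨R, 0⟩ : ℂ) (hdiffon R hR)
    dsimp only at h
    simp only [Complex.ofReal_zero, zero_mul, add_zero, smul_eq_mul] at h
    simp only [smul_eq_mul]
    linear_combination -h
  set c : ℝ := 16 * ((z i).re * (z j).re) with hc
  have hc0 : 0 ≤ c := by positivity
  -- the right side integral tends to zero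
  have hsideR : Tendsto (fun R : ℝ => I • ∫ y : ℝ in (-R)..(0:ℝ), G (R + y * I))
      atTop (𝓝 0) := by
    apply squeeze_zero_norm' (a := fun R : ℝ => c / R)
    · filter_upwards [eventually_ge_atTop (2 * M + 2)] with R hR
      have hRpos : 0 < R := by linarith
      have hb : ∀ y ∈ Set.uIoc (-R) (0:ℝ), ‖G ((R : ℂ) + (y:ℝ) * I)‖ ≤ c / R ^ 2 := by
        intro y hy
        rw [Set.uIoc_of_le (by linarith : -R ≤ (0:ℝ))] at hy
        refine hkey R hR _ (by simp [hy.2]) ?_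
        have h1 : |((R:ℂ) + (y:ℝ) * I).re| ≤ ‖(R:ℂ) + (y:ℝ) * I‖ := by
          exact Complex.abs_re_le_norm _
        have h2 : ((R:ℂ) + (y:ℝ) * I).re = R := by simp
        rw [h2, _root_.abs_of_nonneg hRpos.le] at h1
        exact h1
      have hle := intervalIntegral.norm_integral_le_of_norm_le_const hb
      rw [norm_smul, Complex.norm_I, one_mul]
      calc ‖∫ y : ℝ in (-R)..(0:ℝ), G ((R:ℂ) + (y:ℝ) * I)‖ ≤ c / R ^ 2 * |0 - (-R)| := hle
        _ = c / R := by
            rw [zero_sub, abs_neg, abs_neg, _root_.abs_of_nonneg hRpos.le]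
            field_simp
    · exact tendsto_const_nhds.div_atTop tendsto_id
  -- the left side integral tends to zero
  have hsideL : Tendsto (fun R : ℝ => I • ∫ y : ℝ in (-R)..(0:ℝ), G ((-R : ℝ) + y * I))
      atTop (𝓝 0) := by
    apply squeeze_zero_norm' (a := fun R : ℝ => c / R)
    · filter_upwards [eventually_ge_atTop (2 * M + 2)] with R hR
      have hRpos : 0 < R := by linarith
      have hb : ∀ y ∈ Set.uIoc (-R) (0:ℝ), ‖G (((-R : ℝ):ℂ) + (y:ℝ) * I)‖ ≤ c / R ^ 2 := by
        intro y hy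
        rw [Set.uIoc_of_le (by linarith : -R ≤ (0:ℝ))] at hy
        refine hkey R hR _ (by simp [hy.2]) ?_
        have h1 : |(((-R : ℝ):ℂ) + (y:ℝ) * I).re| ≤ ‖((-R : ℝ):ℂ) + (y:ℝ) * I‖ := by
          exact Complex.abs_re_le_norm _
        have h2 : (((-R : ℝ):ℂ) + (y:ℝ) * I).re = -R := by simp
        rw [h2, abs_neg, _root_.abs_of_nonneg hRpos.le] at h1
        exact h1
      have hle := intervalIntegral.norm_integral_le_of_norm_le_const hb
      rw [norm_smul, Complex.norm_I, one_mul]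
      calc ‖∫ y : ℝ in (-R)..(0:ℝ), G (((-R : ℝ):ℂ) + (y:ℝ) * I)‖
            ≤ c / R ^ 2 * |0 - (-R)| := hle
        _ = c / R := by
            rw [zero_sub, abs_neg, abs_neg, _root_.abs_of_nonneg hRpos.le]
            field_simp
    · exact tendsto_const_nhds.div_atTop tendsto_id
  -- the bottom side integral tends to zero
  have hbot : Tendsto (fun R : ℝ => ∫ x : ℝ in (-R)..R, G (x + (-R : ℝ) * I))
      atTop (𝓝 0) := by
    apply squeeze_zero_norm' (a := fun R : ℝ => 2 * c / R)
    · filter_upwards [eventually_ge_atTop (2 * M + 2)] with R hR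
      have hRpos : 0 < R := by linarith
      have hb : ∀ x ∈ Set.uIoc (-R) R, ‖G ((x:ℝ) + ((-R : ℝ):ℂ) * I)‖ ≤ c / R ^ 2 := by
        intro x hx
        refine hkey R hR _ (by simp; linarith) ?_
        have h1 : |(((x:ℝ):ℂ) + ((-R : ℝ):ℂ) * I).im| ≤ ‖((x:ℝ):ℂ) + ((-R : ℝ):ℂ) * I‖ := by
          exact Complex.abs_im_le_norm _
        have h2 : (((x:ℝ):ℂ) + ((-R : ℝ):ℂ) * I).im = -R := by simp
        rw [h2, abs_neg, _root_.abs_of_nonneg hRpos.le] at h1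
        exact h1
      have hle := intervalIntegral.norm_integral_le_of_norm_le_const hb
      calc ‖∫ x : ℝ in (-R)..R, G ((x:ℝ) + ((-R : ℝ):ℂ) * I)‖ ≤ c / R ^ 2 * |R - (-R)| := hle
        _ = 2 * c / R := by
            rw [sub_neg_eq_add, show R + R = 2 * R by ring, _root_.abs_of_nonneg (by linarith)]
            field_simp
    · exact tendsto_const_nhds.div_atTop tendsto_id
  -- combine
  have hcomb : Tendsto (fun R : ℝ => ∫ x : ℝ in (-R)..R, G x) atTop (𝓝 0) := by
    have h := (hbot.add hsideR).sub hsideL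
    rw [show (0:ℂ) + 0 - 0 = 0 by ring] at h
    refine h.congr' ?_
    filter_upwards [eventually_ge_atTop (0:ℝ)] with R hR
    exact (hrect R hR).symm
  have hval : (∫ ω : ℝ, G (ω : ℂ)) = 0 := by
    have h1 : Tendsto (fun R : ℝ => ∫ x : ℝ in (-R)..R, G x) atTop
        (𝓝 (∫ ω : ℝ, G (ω : ℂ))) :=
      intervalIntegral_tendsto_integral hInt tendsto_neg_atTop_atBot tendsto_id
    exact tendsto_nhds_unique h1 hcomb
  rw [MeasureTheory.integral_congr_ae (Eventually.of_forall hpt), hval, mul_zero]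
end

section
/- Let p_1, …, p_n ∈ ℂ with Re p_i > 0 for all i, and let c_1, …, c_n ∈ ℂ. Then (1/(2π)) ∫_{−∞}^{∞} |Σ_{i=1}^n c_i · (2 Re p_i/(iω − p_i))|² dω = Σ_{i=1}^n Σ_{j=1}^n (4 Re p_i · Re p_j / (conj(p_i) + p_j)) · conj(c_i) · c_j. (Closed-form evaluation of the L² norm of a sum of weighted antistable first-order terms; this is the computation producing the factor 4Re(p_i)Re(p_j)/(p̄_i + p_j) in the pole-dependent part J₂* of Theorem 1.) -/
open Complex Filter MeasureTheory Real Topology intervalIntegral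


lemma tendsto_div_cast (a : ℂ) :
    Tendsto (fun R : ℝ => (a + I * R) / R) atTop (𝓝 I) := by
  have h1 : Tendsto (fun R : ℝ => a * ((R : ℂ))⁻¹) atTop (𝓝 0) := by
    have : Tendsto (fun R : ℝ => ((R⁻¹ : ℝ) : ℂ)) atTop (𝓝 ((0:ℝ):ℂ)) :=
      (Complex.continuous_ofReal.tendsto _).comp tendsto_inv_atTop_zero
    simpa using this.const_mul a
  have h2 : Tendsto (fun R : ℝ => a * ((R:ℂ))⁻¹ + I) atTop (𝓝 (0 + I)) := h1.add_const I
  rw [zero_add] at h2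
  refine h2.congr' ?_
  filter_upwards [eventually_gt_atTop (0:ℝ)] with R hR
  have hR' : (R:ℂ) ≠ 0 := by exact_mod_cast hR.ne'
  field_simp

lemma tendsto_logabs (a : ℂ) :
    Tendsto (fun R : ℝ => Real.log (‖a + I * R‖) - Real.log R) atTop (𝓝 0) := by
  have h0 : Tendsto (fun R : ℝ => ‖(a + I * R) / R‖) atTop (𝓝 1) := by
    have : Tendsto ((fun z : ℂ => ‖z‖) ∘ fun R : ℝ => (a + I * R) / R) atTop (𝓝 ‖I‖) :=
      (continuous_norm.tendsto I).comp (tendsto_div_cast a)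
    simpa only [Function.comp_def, Complex.norm_I] using this
  have h1 : Tendsto (fun R : ℝ => Real.log (‖(a + I * R) / R‖)) atTop (𝓝 0) := by
    have := (Real.continuousAt_log one_ne_zero).tendsto.comp h0
    simpa [Function.comp_def] using this
  refine h1.congr' ?_
  filter_upwards [eventually_gt_atTop (max 0 |a.im|)] with R hR
  have hR0 : (0:ℝ) < R := lt_of_le_of_lt (le_max_left _ _) hR
  have him : (a + I * R).im ≠ 0 := by
    have h2 : |a.im| < R := lt_of_le_of_lt (le_max_right _ _) hR
    have h3 : -a.im < R := lt_of_le_of_lt (neg_le_abs _) h2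
    simp only [Complex.add_im, Complex.mul_im, Complex.I_re, Complex.I_im,
      Complex.ofReal_re, Complex.ofReal_im]
    nlinarith
  have hz : (a + I * R) ≠ 0 := fun h => him (by rw [h]; simp)
  rw [norm_div, Complex.norm_real, Real.norm_eq_abs, abs_of_pos hR0,
    Real.log_div (norm_ne_zero_iff.mpr hz) hR0.ne']

lemma tendsto_arg_pi_div_two (a : ℂ) (ha : 0 < a.re) :
    Tendsto (fun R : ℝ => Complex.arg (a + I * R)) atTop (𝓝 (π / 2)) := by
  have h0 : Tendsto (fun R : ℝ => ((a + I * R) / R).im / ‖(a + I * R) / R‖)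
      atTop (𝓝 (I.im / ‖I‖)) := by
    have hc : ContinuousAt (fun z : ℂ => z.im / ‖z‖) I :=
      (Complex.continuous_im.continuousAt).div
        (continuous_norm.continuousAt) (by simp)
    exact hc.tendsto.comp (tendsto_div_cast a)
  simp only [Complex.I_im, Complex.norm_I, div_one] at h0
  have h1 : Tendsto (fun R : ℝ => Real.arcsin (((a + I * R) / R).im /
      ‖(a + I * R) / R‖)) atTop (𝓝 (π / 2)) := by
    have := (Real.continuous_arcsin.continuousAt (x := (1:ℝ))).tendsto.comp h0
    simpa [Function.comp_def, Real.arcsin_one] using this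
  refine h1.congr' ?_
  filter_upwards [eventually_gt_atTop (0:ℝ)] with R hR
  rw [Complex.arg_of_re_nonneg (by simp [ha.le] : 0 ≤ (a + I * (R:ℂ)).re)]
  rw [Complex.div_ofReal_im, norm_div, Complex.norm_real, Real.norm_eq_abs, abs_of_pos hR,
    div_div_div_cancel_right₀ hR.ne' _ _]
lemma tendsto_log_sub (a : ℂ) (ha : 0 < a.re) :
    Tendsto (fun R : ℝ => Complex.log (a + I * R) - Complex.log (a - I * R))
      atTop (𝓝 (π * I)) := by
  have hconj : ∀ R : ℝ, a - I * R = (starRingEnd ℂ) ((starRingEnd ℂ) a + I * R) := by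
    intro R; simp [map_add, map_mul, Complex.conj_I, Complex.conj_ofReal]; ring
  -- real part: difference of logabs
  have hre : Tendsto (fun R : ℝ =>
      Real.log (‖a + I * R‖) - Real.log (‖(starRingEnd ℂ) a + I * R‖))
      atTop (𝓝 0) := by
    have := (tendsto_logabs a).sub (tendsto_logabs ((starRingEnd ℂ) a))
    simpa using this
  have harg : Tendsto (fun R : ℝ =>
      Complex.arg (a + I * R) + Complex.arg ((starRingEnd ℂ) a + I * R))
      atTop (𝓝 π) := by
    have h2 := (tendsto_arg_pi_div_two a ha).add
      (tendsto_arg_pi_div_two ((starRingEnd ℂ) a) (by simpa using ha))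
    simpa [add_halves] using h2
  have hcomb : Tendsto (fun R : ℝ =>
      ((Real.log (‖a + I * R‖) - Real.log (‖(starRingEnd ℂ) a + I * R‖) : ℝ) : ℂ)
      + ((Complex.arg (a + I * R) + Complex.arg ((starRingEnd ℂ) a + I * R) : ℝ) : ℂ) * I)
      atTop (𝓝 (((0:ℝ):ℂ) + ((π:ℝ):ℂ) * I)) := by
    exact (((Complex.continuous_ofReal.tendsto _).comp hre)).add
      ((((Complex.continuous_ofReal.tendsto _).comp harg)).mul_const I)
  simp only [Complex.ofReal_zero, zero_add] at hcomb
  refine hcomb.congr ?_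
  intro R
  rw [hconj R]
  have hpi : ((starRingEnd ℂ) a + I * R).arg ≠ π := by
    intro h
    rw [Complex.arg_eq_pi_iff] at h
    have := h.1
    simp only [Complex.add_re, Complex.conj_re, Complex.mul_re, Complex.I_re,
      Complex.I_im, Complex.ofReal_re, Complex.ofReal_im] at this
    nlinarith
  rw [Complex.log, Complex.log, Complex.arg_conj, if_neg hpi, Complex.norm_conj]
  push_cast
  ring
lemma integrable_inv_sq_add (k : ℝ) (hk : 0 < k) (c : ℝ) :
    Integrable (fun x : ℝ => (k ^ 2 + (x + c) ^ 2)⁻¹) := by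
  have h1 : Integrable (fun x : ℝ => (k ^ 2)⁻¹ * (1 + (x / k) ^ 2)⁻¹) :=
    (integrable_inv_one_add_sq.comp_div hk.ne').const_mul _
  have h2 : Integrable (fun x : ℝ => (k ^ 2 + x ^ 2)⁻¹) := by
    refine h1.congr (Eventually.of_forall fun x => ?_)
    field_simp
  simpa using h2.comp_add_right c

lemma integrable_kernel (a b : ℂ) (ha : 0 < a.re) (hb : 0 < b.re) :
    Integrable (fun ω : ℝ => ((a + I * ω) * (b - I * ω))⁻¹) := by
  have hne : ∀ ω : ℝ, (a + I * ω) * (b - I * ω) ≠ 0 := by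
    intro ω
    apply mul_ne_zero
    · intro h
      have : (a + I * (ω:ℂ)).re = 0 := by rw [h]; simp
      simp only [Complex.add_re, Complex.mul_re, Complex.I_re, Complex.I_im,
        Complex.ofReal_re, Complex.ofReal_im] at this
      nlinarith
    · intro h
      have : (b - I * (ω:ℂ)).re = 0 := by rw [h]; simp
      simp only [Complex.sub_re, Complex.mul_re, Complex.I_re, Complex.I_im,
        Complex.ofReal_re, Complex.ofReal_im] at this
      nlinarith
  have hcont : Continuous fun ω : ℝ => ((a + I * ω) * (b - I * ω))⁻¹ := by
    apply Continuous.inv₀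
    · continuity
    · exact hne
  refine Integrable.mono' (g := fun ω : ℝ =>
      (2:ℝ)⁻¹ * ((a.re ^ 2 + (ω + a.im) ^ 2)⁻¹ + (b.re ^ 2 + (ω + -b.im) ^ 2)⁻¹))
    (((integrable_inv_sq_add a.re ha a.im).add
      (integrable_inv_sq_add b.re hb (-b.im))).const_mul _)
    hcont.aestronglyMeasurable (Eventually.of_forall fun ω => ?_)
  have e1 : ‖a + I * ω‖ ^ 2 = a.re ^ 2 + (ω + a.im) ^ 2 := by
    rw [Complex.sq_norm, Complex.normSq_apply]
    simp only [Complex.add_re, Complex.add_im, Complex.mul_re, Complex.mul_im,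
      Complex.I_re, Complex.I_im, Complex.ofReal_re, Complex.ofReal_im]
    ring
  have e2 : ‖b - I * ω‖ ^ 2 = b.re ^ 2 + (ω + -b.im) ^ 2 := by
    rw [Complex.sq_norm, Complex.normSq_apply]
    simp only [Complex.sub_re, Complex.sub_im, Complex.mul_re, Complex.mul_im,
      Complex.I_re, Complex.I_im, Complex.ofReal_re, Complex.ofReal_im]
    ring
  have hx : 0 < ‖a + I * ω‖ := by
    refine norm_pos_iff.mpr fun h => ?_
    exact (hne ω) (by rw [h, zero_mul])
  have hy : 0 < ‖b - I * ω‖ := by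
    refine norm_pos_iff.mpr fun h => ?_
    exact (hne ω) (by rw [h, mul_zero])
  show (‖((a + I * (ω:ℂ)) * (b - I * (ω:ℂ)))⁻¹‖ : ℝ) ≤
      2⁻¹ * ((a.re ^ 2 + (ω + a.im) ^ 2)⁻¹ + (b.re ^ 2 + (ω + -b.im) ^ 2)⁻¹)
  rw [norm_inv, norm_mul, mul_inv, ← e1, ← e2]
  have h := sq_nonneg ((‖a + I * ω‖)⁻¹ - (‖b - I * ω‖)⁻¹)
  rw [← inv_pow, ← inv_pow]
  nlinarith [h]
lemma key_integral (a b : ℂ) (ha : 0 < a.re) (hb : 0 < b.re) :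
    ∫ ω : ℝ, ((a + I * ω) * (b - I * ω))⁻¹ = 2 * π / (a + b) := by
  have hane : ∀ ω : ℝ, a + I * ω ≠ 0 := by
    intro ω h
    have : (a + I * (ω:ℂ)).re = 0 := by rw [h]; simp
    simp only [Complex.add_re, Complex.mul_re, Complex.I_re, Complex.I_im,
      Complex.ofReal_re, Complex.ofReal_im] at this
    nlinarith
  have hbne : ∀ ω : ℝ, b - I * ω ≠ 0 := by
    intro ω h
    have : (b - I * (ω:ℂ)).re = 0 := by rw [h]; simp
    simp only [Complex.sub_re, Complex.mul_re, Complex.I_re, Complex.I_im,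
      Complex.ofReal_re, Complex.ofReal_im] at this
    nlinarith
  have habne : a + b ≠ 0 := by
    intro h
    have : (a + b).re = 0 := by rw [h]; simp
    simp only [Complex.add_re] at this
    nlinarith
  set Φ : ℝ → ℂ := fun ω => (a + b)⁻¹ * (-I) *
    (Complex.log (a + I * ω) - Complex.log (b - I * ω)) with hΦ
  have hderiv : ∀ ω : ℝ, HasDerivAt Φ (((a + I * ω) * (b - I * ω))⁻¹) ω := by
    intro ω
    have hinner1 : HasDerivAt (fun ω : ℝ => a + I * (ω : ℂ)) I ω := by
      have h0 : HasDerivAt (fun ω : ℝ => ((ω : ℝ) : ℂ)) 1 ω := by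
        simpa using (hasDerivAt_id ω).ofReal_comp (z := ω)
      simpa using (h0.const_mul I).const_add a
    have hinner2 : HasDerivAt (fun ω : ℝ => b - I * (ω : ℂ)) (-I) ω := by
      have h0 : HasDerivAt (fun ω : ℝ => ((ω : ℝ) : ℂ)) 1 ω := by
        simpa using (hasDerivAt_id ω).ofReal_comp (z := ω)
      simpa using (h0.const_mul I).const_sub b
    have hre1 : (a + I * (ω:ℂ)).re = a.re := by
      simp [Complex.add_re, Complex.mul_re]
    have hre2 : (b - I * (ω:ℂ)).re = b.re := by
      simp [Complex.sub_re, Complex.mul_re]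
    have hs1 : (a + I * (ω:ℂ)) ∈ Complex.slitPlane :=
      Complex.mem_slitPlane_iff.2 (Or.inl (by rw [hre1]; exact ha))
    have hs2 : (b - I * (ω:ℂ)) ∈ Complex.slitPlane :=
      Complex.mem_slitPlane_iff.2 (Or.inl (by rw [hre2]; exact hb))
    have hlog1 : HasDerivAt (fun ω : ℝ => Complex.log (a + I * ω))
        ((a + I * ω)⁻¹ * I) ω :=
      HasDerivAt.comp (h₂ := Complex.log) ω (Complex.hasDerivAt_log hs1) hinner1
    have hlog2 : HasDerivAt (fun ω : ℝ => Complex.log (b - I * ω))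
        ((b - I * ω)⁻¹ * (-I)) ω :=
      HasDerivAt.comp (h₂ := Complex.log) ω (Complex.hasDerivAt_log hs2) hinner2
    have : HasDerivAt Φ ((a + b)⁻¹ * (-I) * ((a + I * ω)⁻¹ * I - (b - I * ω)⁻¹ * (-I))) ω :=
      ((hlog1.sub hlog2).const_mul ((a + b)⁻¹ * (-I)))
    convert this using 1
    have h1 := hane ω
    have h2 := hbne ω
    field_simp
    linear_combination (a + b) * Complex.I_sq
  -- interval integrals
  have hint := integrable_kernel a b ha hb
  have hIcc : ∀ R : ℝ, (∫ ω in (-R)..R, ((a + I * ω) * (b - I * ω))⁻¹) = Φ R - Φ (-R) := by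
    intro R
    exact intervalIntegral.integral_eq_sub_of_hasDerivAt (fun x _ => hderiv x)
      hint.intervalIntegrable
  have hlim1 : Tendsto (fun R : ℝ => ∫ ω in (-R)..R, ((a + I * ω) * (b - I * ω))⁻¹)
      atTop (𝓝 (∫ ω : ℝ, ((a + I * ω) * (b - I * ω))⁻¹)) :=
    intervalIntegral_tendsto_integral hint tendsto_neg_atTop_atBot tendsto_id
  have hlim2 : Tendsto (fun R : ℝ => Φ R - Φ (-R)) atTop (𝓝 (2 * π / (a + b))) := by
    have hA := tendsto_log_sub a ha
    have hB := tendsto_log_sub b hb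
    have hsum := hA.add hB
    have : Tendsto (fun R : ℝ => (a + b)⁻¹ * (-I) *
        ((Complex.log (a + I * R) - Complex.log (a - I * R)) +
         (Complex.log (b + I * R) - Complex.log (b - I * R))))
        atTop (𝓝 ((a + b)⁻¹ * (-I) * (π * I + π * I))) := hsum.const_mul _
    have heq : ∀ R : ℝ, Φ R - Φ (-R) = (a + b)⁻¹ * (-I) *
        ((Complex.log (a + I * R) - Complex.log (a - I * R)) +
         (Complex.log (b + I * R) - Complex.log (b - I * R))) := by
      intro R
      rw [hΦ]
      have e1 : a + I * ((-R : ℝ) : ℂ) = a - I * R := by push_cast; ring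
      have e2 : b - I * ((-R : ℝ) : ℂ) = b + I * R := by push_cast; ring
      simp only [e1, e2]
      ring
    rw [show (2 * (π:ℂ) / (a + b)) = (a + b)⁻¹ * (-I) * (π * I + π * I) by
      rw [div_eq_mul_inv]
      have : (I : ℂ) * I = -1 := Complex.I_mul_I
      field_simp
      ring_nf
      rw [Complex.I_sq]
      ring]
    exact this.congr fun R => (heq R).symm
  have := hlim1.congr fun R => hIcc R
  exact tendsto_nhds_unique this hlim2

/-- Closed-form evaluation of the `L²` norm of a sum of weighted antistable
first-order terms:
`(1/(2π)) ∫ |Σ_i c_i (2 Re p_i/(iω - p_i))|² dω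
  = Σ_i Σ_j (4 Re p_i Re p_j/(conj p_i + p_j)) conj(c_i) c_j`. -/
theorem antistable_sum_norm_eval
    (n : ℕ) (p : Fin n → ℂ) (hp : ∀ i, 0 < (p i).re) (c : Fin n → ℂ) :
    (1 / (2 * Real.pi) : ℂ) *
        ∫ ω : ℝ, (‖∑ i, c i *
          ((2 * ((p i).re : ℂ)) / (Complex.I * (ω : ℂ) - p i))‖ ^ 2 : ℂ)
      = ∑ i, ∑ j, (4 * ((p i).re : ℂ) * ((p j).re : ℂ) /
          (starRingEnd ℂ (p i) + p j)) * starRingEnd ℂ (c i) * c j := by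
  set K : Fin n → Fin n → ℂ := fun i j =>
    4 * ((p i).re : ℂ) * ((p j).re : ℂ) * starRingEnd ℂ (c i) * c j with hK
  have hne : ∀ (q : ℂ) (_ : 0 < q.re) (ω : ℝ), I * (ω:ℂ) - q ≠ 0 := by
    intro q hq ω h
    have : (I * (ω:ℂ) - q).re = 0 := by rw [h]; simp
    simp only [Complex.sub_re, Complex.mul_re, Complex.I_re, Complex.I_im,
      Complex.ofReal_re, Complex.ofReal_im] at this
    nlinarith
  have hane : ∀ (i : Fin n) (ω : ℝ), starRingEnd ℂ (p i) + I * (ω:ℂ) ≠ 0 := by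
    intro i ω h
    have : ((starRingEnd ℂ) (p i) + I * (ω:ℂ)).re = 0 := by rw [h]; simp
    simp only [Complex.add_re, Complex.conj_re, Complex.mul_re, Complex.I_re,
      Complex.I_im, Complex.ofReal_re, Complex.ofReal_im] at this
    nlinarith [hp i]
  have hbne : ∀ (j : Fin n) (ω : ℝ), p j - I * (ω:ℂ) ≠ 0 := by
    intro j ω h
    have : (p j - I * (ω:ℂ)).re = 0 := by rw [h]; simp
    simp only [Complex.sub_re, Complex.mul_re, Complex.I_re, Complex.I_im,
      Complex.ofReal_re, Complex.ofReal_im] at this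
    nlinarith [hp j]
  have hintegrand : ∀ ω : ℝ, ((‖∑ i, c i *
      ((2 * ((p i).re : ℂ)) / (Complex.I * (ω : ℂ) - p i))‖ : ℂ)) ^ 2
      = ∑ i, ∑ j, K i j * ((starRingEnd ℂ (p i) + I * ω) * (p j - I * ω))⁻¹ := by
    intro ω
    set z : ℂ := ∑ i, c i * ((2 * ((p i).re : ℂ)) / (Complex.I * (ω : ℂ) - p i)) with hz
    have h1 : ((‖z‖ : ℝ) : ℂ) ^ 2 = (starRingEnd ℂ) z * z := by
      rw [← Complex.ofReal_pow, Complex.sq_norm, ← Complex.mul_conj]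
      exact mul_comm _ _
    rw [h1, hz, map_sum, Finset.sum_mul_sum]
    refine Finset.sum_congr rfl fun i _ => Finset.sum_congr rfl fun j _ => ?_
    have hc : (starRingEnd ℂ) (I * (ω:ℂ) - p i)
        = -((starRingEnd ℂ) (p i) + I * (ω:ℂ)) := by
      simp only [map_sub, map_mul, Complex.conj_I, Complex.conj_ofReal]
      ring
    rw [map_mul, map_div₀]
    have h3 := hane i ω
    have h4 := hbne j ω
    have h5 := hne (p j) (hp j) ω
    have hcr : (starRingEnd ℂ) (2 * ((p i).re : ℂ)) = 2 * ((p i).re : ℂ) := by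
      have h2 : (2 * ((p i).re:ℂ)) = (((2 * (p i).re : ℝ)):ℂ) := by push_cast; ring
      rw [h2, Complex.conj_ofReal]
    simp only [hK]
    rw [hcr, hc, div_neg, show I * (ω:ℂ) - p j = -(p j - I * (ω:ℂ)) from by ring,
      div_neg]
    field_simp
    ring
  have hintK : ∀ i j : Fin n, Integrable (fun ω : ℝ =>
      K i j * ((starRingEnd ℂ (p i) + I * ω) * (p j - I * ω))⁻¹) := by
    intro i j
    exact (integrable_kernel _ _ (by simpa using hp i) (hp j)).const_mul _
  have hI : (∫ ω : ℝ, ((‖∑ i, c i *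
      ((2 * ((p i).re : ℂ)) / (Complex.I * (ω : ℂ) - p i))‖ : ℂ)) ^ 2 : ℂ)
      = ∑ i, ∑ j, K i j * (2 * π / ((starRingEnd ℂ) (p i) + p j)) := by
    simp only [hintegrand]
    rw [integral_finset_sum _ fun i _ => integrable_finset_sum _ fun j _ => hintK i j]
    refine Finset.sum_congr rfl fun i _ => ?_
    rw [integral_finset_sum _ fun j _ => hintK i j]
    refine Finset.sum_congr rfl fun j _ => ?_
    rw [MeasureTheory.integral_const_mul,
      key_integral _ _ (by simpa using hp i) (hp j)]
  rw [hI, Finset.mul_sum]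
  refine Finset.sum_congr rfl fun i _ => ?_
  rw [Finset.mul_sum]
  refine Finset.sum_congr rfl fun j _ => ?_
  have hd : (starRingEnd ℂ) (p i) + p j ≠ 0 := by
    intro h
    have : ((starRingEnd ℂ) (p i) + p j).re = 0 := by rw [h]; simp
    simp only [Complex.add_re, Complex.conj_re] at this
    nlinarith [hp i, hp j]
  have hπ : ((π : ℝ) : ℂ) ≠ 0 := by
    exact_mod_cast Complex.ofReal_ne_zero.2 Real.pi_ne_zero
  simp only [hK]
  field_simp
end

section
/- Let p_1, …, p_n ∈ ℂ with Re p_i > 0 for all i, and let A_1, …, A_n be m×m complex matrices. Then (1/(2π)) ∫_{−∞}^{∞} ‖Σ_{i=1}^n (2 Re p_i/(iω − p_i)) · A_i‖_F² dω = Σ_{i=1}^n Σ_{j=1}^n (4 Re p_i · Re p_j / (conj(p_i) + p_j)) · Tr(A_i^H A_j). (Matrix version of the pole quadratic form; this is the evaluation yielding the expression J₂* = Σ_{i,j} (4Re(p_i)Re(p_j)/(p̄_i + p_j)) h_i^H f_i^H f_j h_j g_j^H g_i in Theorem 2.) -/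
open Matrix

section AuxPoleIntegral

open MeasureTheory Filter Real Complex Topology

noncomputable def Gaux (z : ℂ) (ω : ℝ) : ℂ :=
  ((Real.log ((ω - z.re) ^ 2 + z.im ^ 2) / 2 : ℝ) : ℂ) +
    Complex.I * ((Real.arctan ((ω - z.re) / z.im) : ℝ) : ℂ)

lemma Gaux_hasDerivAt (z : ℂ) (hz : z.im ≠ 0) (ω : ℝ) :
    HasDerivAt (Gaux z) (((ω : ℂ) - z)⁻¹) ω := by
  set x := z.re; set y := z.im
  have hd : (0:ℝ) < (ω - x) ^ 2 + y ^ 2 := by positivity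
  have hinner : HasDerivAt (fun ω : ℝ => (ω - x) ^ 2 + y ^ 2) (2 * (ω - x)) ω := by
    have := (((hasDerivAt_id ω).sub_const x).pow 2).add_const (y ^ 2)
    simpa using this
  have hlog : HasDerivAt (fun ω : ℝ => Real.log ((ω - x) ^ 2 + y ^ 2) / 2)
      ((ω - x) / ((ω - x) ^ 2 + y ^ 2)) ω := by
    have := ((Real.hasDerivAt_log (ne_of_gt hd)).comp ω hinner).div_const 2
    refine this.congr_deriv ?_
    field_simp
  have harct : HasDerivAt (fun ω : ℝ => Real.arctan ((ω - x) / y))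
      (y / ((ω - x) ^ 2 + y ^ 2)) ω := by
    have hin : HasDerivAt (fun ω : ℝ => (ω - x) / y) (1 / y) ω := by
      simpa using ((hasDerivAt_id ω).sub_const x).div_const y
    have := (Real.hasDerivAt_arctan ((ω - x) / y)).comp ω hin
    refine this.congr_deriv ?_
    field_simp
    ring
  have h1 := hlog.ofReal_comp
  have h2 := (harct.ofReal_comp).const_mul Complex.I
  have h := h1.add h2
  refine h.congr_deriv ?_
  symm
  have hωz : (ω : ℂ) - z ≠ 0 := by
    intro hcon
    apply hz
    have := congrArg Complex.im hcon
    simpa using this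
  have hdC : (((ω - x) ^ 2 + y ^ 2 : ℝ) : ℂ) ≠ 0 := by
    exact_mod_cast ne_of_gt hd
  refine inv_eq_of_mul_eq_one_right ?_
  rw [show z = (x : ℂ) + (y : ℂ) * Complex.I from (Complex.re_add_im z).symm]
  have hdC' : ((ω:ℂ) - x) ^ 2 + (y:ℂ) ^ 2 ≠ 0 := by
    intro hcon
    apply hdC
    push_cast at hcon ⊢
    exact hcon
  push_cast
  field_simp
  ring_nf
  simp [Complex.I_sq]

lemma inv_tendsto_zero_atBot : Tendsto (fun ω : ℝ => ω⁻¹) atBot (𝓝 0) := by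
  have h : Tendsto (fun ω : ℝ => ((-ω)⁻¹)) atBot (𝓝 0) :=
    tendsto_inv_atTop_zero.comp tendsto_neg_atBot_atTop
  have h2 := h.neg
  rw [neg_zero] at h2
  refine h2.congr (fun ω => by simp [inv_neg])


lemma sq_ratio (x y : ℝ) (l : Filter ℝ)
    (hinv : Tendsto (fun ω : ℝ => ω⁻¹) l (𝓝 0)) (h0 : ∀ᶠ ω in l, ω ≠ 0) :
    Tendsto (fun ω => ((ω - x) ^ 2 + y ^ 2) / ω ^ 2) l (𝓝 1) := by
  have hx : Tendsto (fun ω : ℝ => (1 - x * ω⁻¹) ^ 2 + (y * ω⁻¹) ^ 2) l (𝓝 1) := by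
    have h1 : Tendsto (fun ω : ℝ => 1 - x * ω⁻¹) l (𝓝 (1 - x * 0)) :=
      (tendsto_const_nhds (x := (1:ℝ))).sub (hinv.const_mul x)
    have h2 : Tendsto (fun ω : ℝ => y * ω⁻¹) l (𝓝 (y * 0)) := hinv.const_mul y
    have h3 := (h1.pow 2).add (h2.pow 2)
    simpa using h3
  refine hx.congr' ?_
  filter_upwards [h0] with ω hω
  rw [eq_comm, div_eq_iff (pow_ne_zero 2 hω)]
  field_simp

lemma logdiff_tendsto (x₁ y₁ x₂ y₂ : ℝ) (hy₁ : y₁ ≠ 0) (hy₂ : y₂ ≠ 0) (l : Filter ℝ)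
    (hinv : Tendsto (fun ω : ℝ => ω⁻¹) l (𝓝 0)) (h0 : ∀ᶠ ω in l, ω ≠ 0) :
    Tendsto (fun ω => Real.log ((ω - x₁) ^ 2 + y₁ ^ 2)
      - Real.log ((ω - x₂) ^ 2 + y₂ ^ 2)) l (𝓝 0) := by
  have h1 := sq_ratio x₁ y₁ l hinv h0
  have h2 := sq_ratio x₂ y₂ l hinv h0
  have hr := h1.div h2 one_ne_zero
  have hlog : Tendsto (fun ω => Real.log ((((ω - x₁) ^ 2 + y₁ ^ 2) / ω ^ 2) /
      (((ω - x₂) ^ 2 + y₂ ^ 2) / ω ^ 2))) l (𝓝 0) := by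
    have := (Real.continuousAt_log one_ne_zero).tendsto.comp (by simpa using hr)
    rwa [Real.log_one] at this
  refine hlog.congr' ?_
  filter_upwards [h0] with ω hω
  have hu₁ : (0:ℝ) < (ω - x₁) ^ 2 + y₁ ^ 2 := by positivity
  have hu₂ : (0:ℝ) < (ω - x₂) ^ 2 + y₂ ^ 2 := by positivity
  rw [show ((ω - x₁) ^ 2 + y₁ ^ 2) / ω ^ 2 / (((ω - x₂) ^ 2 + y₂ ^ 2) / ω ^ 2)
      = ((ω - x₁) ^ 2 + y₁ ^ 2) / ((ω - x₂) ^ 2 + y₂ ^ 2) by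
    field_simp,
    Real.log_div (ne_of_gt hu₁) (ne_of_gt hu₂)]

lemma arctan_tendsto_atTop_pos (x y : ℝ) (hy : 0 < y) :
    Tendsto (fun ω : ℝ => Real.arctan ((ω - x) / y)) atTop (𝓝 (π / 2)) := by
  have hsub : Tendsto (fun ω : ℝ => ω - x) atTop atTop := by
    simpa [sub_eq_add_neg] using tendsto_atTop_add_const_right atTop (-x) tendsto_id
  exact (Real.tendsto_arctan_atTop.mono_right nhdsWithin_le_nhds).comp
    (hsub.atTop_div_const hy)

lemma arctan_tendsto_atTop_neg (x y : ℝ) (hy : y < 0) :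
    Tendsto (fun ω : ℝ => Real.arctan ((ω - x) / y)) atTop (𝓝 (-(π / 2))) := by
  have hsub : Tendsto (fun ω : ℝ => ω - x) atTop atTop := by
    simpa [sub_eq_add_neg] using tendsto_atTop_add_const_right atTop (-x) tendsto_id
  have hin : Tendsto (fun ω : ℝ => (ω - x) / y) atTop atBot := by
    have h1 : Tendsto (fun ω : ℝ => (ω - x) / (-y)) atTop atTop :=
      hsub.atTop_div_const (by linarith)
    have h2 := tendsto_neg_atTop_atBot.comp h1
    refine h2.congr fun ω => ?_
    simp only [Function.comp, div_neg]
    ring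
  exact (Real.tendsto_arctan_atBot.mono_right nhdsWithin_le_nhds).comp hin

lemma arctan_tendsto_atBot_pos (x y : ℝ) (hy : 0 < y) :
    Tendsto (fun ω : ℝ => Real.arctan ((ω - x) / y)) atBot (𝓝 (-(π / 2))) := by
  have hsub : Tendsto (fun ω : ℝ => ω - x) atBot atBot := by
    simpa [sub_eq_add_neg] using tendsto_atBot_add_const_right atBot (-x) tendsto_id
  exact (Real.tendsto_arctan_atBot.mono_right nhdsWithin_le_nhds).comp
    (hsub.atBot_div_const hy)

lemma arctan_tendsto_atBot_neg (x y : ℝ) (hy : y < 0) :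
    Tendsto (fun ω : ℝ => Real.arctan ((ω - x) / y)) atBot (𝓝 (π / 2)) := by
  have hsub : Tendsto (fun ω : ℝ => ω - x) atBot atBot := by
    simpa [sub_eq_add_neg] using tendsto_atBot_add_const_right atBot (-x) tendsto_id
  have hin : Tendsto (fun ω : ℝ => (ω - x) / y) atBot atTop := by
    have h1 : Tendsto (fun ω : ℝ => (ω - x) / (-y)) atBot atBot :=
      hsub.atBot_div_const (by linarith)
    have h2 := tendsto_neg_atBot_atTop.comp h1
    refine h2.congr fun ω => ?_
    simp only [Function.comp, div_neg]
    ring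
  exact (Real.tendsto_arctan_atTop.mono_right nhdsWithin_le_nhds).comp hin

lemma Fdiff_eq (z₁ z₂ : ℂ) (ω : ℝ) :
    Gaux z₁ ω - Gaux z₂ ω =
      (((Real.log ((ω - z₁.re) ^ 2 + z₁.im ^ 2)
          - Real.log ((ω - z₂.re) ^ 2 + z₂.im ^ 2)) / 2 : ℝ) : ℂ) +
        Complex.I * ((Real.arctan ((ω - z₁.re) / z₁.im)
          - Real.arctan ((ω - z₂.re) / z₂.im) : ℝ) : ℂ) := by
  simp only [Gaux]
  push_cast
  ring

lemma Fdiff_tendsto_atTop (z₁ z₂ : ℂ) (h₁ : 0 < z₁.im) (h₂ : z₂.im < 0) :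
    Tendsto (fun ω : ℝ => Gaux z₁ ω - Gaux z₂ ω) atTop (𝓝 (Real.pi * Complex.I)) := by
  have hA : Tendsto (fun ω : ℝ => (Real.log ((ω - z₁.re) ^ 2 + z₁.im ^ 2)
      - Real.log ((ω - z₂.re) ^ 2 + z₂.im ^ 2)) / 2) atTop (𝓝 0) := by
    have := (logdiff_tendsto z₁.re z₁.im z₂.re z₂.im (ne_of_gt h₁) (ne_of_lt h₂)
      atTop tendsto_inv_atTop_zero (eventually_ne_atTop 0)).div_const 2
    simpa using this
  have hB : Tendsto (fun ω : ℝ => Real.arctan ((ω - z₁.re) / z₁.im)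
      - Real.arctan ((ω - z₂.re) / z₂.im)) atTop (𝓝 π) := by
    have h := (arctan_tendsto_atTop_pos z₁.re z₁.im h₁).sub
      (arctan_tendsto_atTop_neg z₂.re z₂.im h₂)
    have e : π / 2 - -(π / 2) = π := by ring
    rwa [e] at h
  have hAc : Tendsto (fun ω : ℝ => (((Real.log ((ω - z₁.re) ^ 2 + z₁.im ^ 2)
      - Real.log ((ω - z₂.re) ^ 2 + z₂.im ^ 2)) / 2 : ℝ) : ℂ)) atTop (𝓝 0) := by
    have := (Complex.continuous_ofReal.tendsto 0).comp hA
    simpa [Function.comp_def] using this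
  have hBc : Tendsto (fun ω : ℝ => Complex.I * ((Real.arctan ((ω - z₁.re) / z₁.im)
      - Real.arctan ((ω - z₂.re) / z₂.im) : ℝ) : ℂ)) atTop (𝓝 (Complex.I * π)) := by
    have := ((Complex.continuous_ofReal.tendsto π).comp hB).const_mul Complex.I
    simpa using this
  have := hAc.add hBc
  rw [zero_add] at this
  refine Tendsto.congr (fun ω => (Fdiff_eq z₁ z₂ ω).symm) ?_
  convert this using 2
  ring

lemma Fdiff_tendsto_atBot (z₁ z₂ : ℂ) (h₁ : 0 < z₁.im) (h₂ : z₂.im < 0) :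
    Tendsto (fun ω : ℝ => Gaux z₁ ω - Gaux z₂ ω) atBot (𝓝 (-(Real.pi * Complex.I))) := by
  have hA : Tendsto (fun ω : ℝ => (Real.log ((ω - z₁.re) ^ 2 + z₁.im ^ 2)
      - Real.log ((ω - z₂.re) ^ 2 + z₂.im ^ 2)) / 2) atBot (𝓝 0) := by
    have := (logdiff_tendsto z₁.re z₁.im z₂.re z₂.im (ne_of_gt h₁) (ne_of_lt h₂)
      atBot inv_tendsto_zero_atBot (eventually_ne_atBot 0)).div_const 2
    simpa using this
  have hB : Tendsto (fun ω : ℝ => Real.arctan ((ω - z₁.re) / z₁.im)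
      - Real.arctan ((ω - z₂.re) / z₂.im)) atBot (𝓝 (-π)) := by
    have h := (arctan_tendsto_atBot_pos z₁.re z₁.im h₁).sub
      (arctan_tendsto_atBot_neg z₂.re z₂.im h₂)
    have e : -(π / 2) - π / 2 = -π := by ring
    rwa [e] at h
  have hAc : Tendsto (fun ω : ℝ => (((Real.log ((ω - z₁.re) ^ 2 + z₁.im ^ 2)
      - Real.log ((ω - z₂.re) ^ 2 + z₂.im ^ 2)) / 2 : ℝ) : ℂ)) atBot (𝓝 0) := by
    have := (Complex.continuous_ofReal.tendsto 0).comp hA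
    simpa [Function.comp_def] using this
  have hBc : Tendsto (fun ω : ℝ => Complex.I * ((Real.arctan ((ω - z₁.re) / z₁.im)
      - Real.arctan ((ω - z₂.re) / z₂.im) : ℝ) : ℂ)) atBot (𝓝 (Complex.I * (-π))) := by
    have := ((Complex.continuous_ofReal.tendsto (-π)).comp hB).const_mul Complex.I
    simpa using this
  have := hAc.add hBc
  rw [zero_add] at this
  refine Tendsto.congr (fun ω => (Fdiff_eq z₁ z₂ ω).symm) ?_
  convert this using 2
  ring

lemma aux_integrable_s10 (t r : ℝ) (hr : 0 < r) :
    Integrable (fun ω : ℝ => ((ω - t) ^ 2 + r ^ 2)⁻¹) := by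
  have h1 : Integrable (fun x : ℝ => (1 + x ^ 2)⁻¹) := integrable_inv_one_add_sq
  have h2 := ((h1.comp_div (ne_of_gt hr)).comp_sub_right t).const_mul ((r ^ 2)⁻¹)
  refine h2.congr (Filter.Eventually.of_forall fun ω => ?_)
  have hr2 : r ^ 2 ≠ 0 := by positivity
  field_simp
  ring

lemma ofReal_sub_ne (z : ℂ) (hz : z.im ≠ 0) (ω : ℝ) : (ω : ℂ) - z ≠ 0 := by
  intro h
  apply hz
  have := congrArg Complex.im h
  simpa using this

lemma aux_integrable' (t r : ℝ) (hr : r ≠ 0) :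
    Integrable (fun ω : ℝ => ((ω - t) ^ 2 + r ^ 2)⁻¹) := by
  simpa [sq_abs] using aux_integrable_s10 t |r| (abs_pos.mpr hr)

lemma norm_sub_z_sq (z : ℂ) (ω : ℝ) :
    ‖(ω : ℂ) - z‖ ^ 2 = (ω - z.re) ^ 2 + z.im ^ 2 := by
  simp [Complex.sq_norm, Complex.normSq_apply]
  ring

lemma norm_prod_inv_le (z₁ z₂ : ℂ) (ω : ℝ) :
    ‖((ω : ℂ) - z₁)⁻¹ * ((ω : ℂ) - z₂)⁻¹‖ ≤
      (((ω - z₁.re) ^ 2 + z₁.im ^ 2)⁻¹ + ((ω - z₂.re) ^ 2 + z₂.im ^ 2)⁻¹) / 2 := by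
  rw [norm_mul, norm_inv, norm_inv]
  have ha : (0:ℝ) ≤ ‖(ω : ℂ) - z₁‖⁻¹ := by positivity
  have hb : (0:ℝ) ≤ ‖(ω : ℂ) - z₂‖⁻¹ := by positivity
  have h1 : ‖(ω : ℂ) - z₁‖⁻¹ * ‖(ω : ℂ) - z₂‖⁻¹ ≤
      ((‖(ω : ℂ) - z₁‖⁻¹) ^ 2 + (‖(ω : ℂ) - z₂‖⁻¹) ^ 2) / 2 := by
    nlinarith [sq_nonneg (‖(ω : ℂ) - z₁‖⁻¹ - ‖(ω : ℂ) - z₂‖⁻¹)]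
  calc ‖(ω : ℂ) - z₁‖⁻¹ * ‖(ω : ℂ) - z₂‖⁻¹
      ≤ ((‖(ω : ℂ) - z₁‖⁻¹) ^ 2 + (‖(ω : ℂ) - z₂‖⁻¹) ^ 2) / 2 := h1
    _ = (((ω - z₁.re) ^ 2 + z₁.im ^ 2)⁻¹ + ((ω - z₂.re) ^ 2 + z₂.im ^ 2)⁻¹) / 2 := by
        rw [inv_pow, inv_pow, norm_sub_z_sq, norm_sub_z_sq]

lemma integrable_prod_inv (z₁ z₂ : ℂ) (h₁ : z₁.im ≠ 0) (h₂ : z₂.im ≠ 0) :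
    Integrable (fun ω : ℝ => ((ω : ℂ) - z₁)⁻¹ * ((ω : ℂ) - z₂)⁻¹) := by
  have hg : Integrable (fun ω : ℝ =>
      (((ω - z₁.re) ^ 2 + z₁.im ^ 2)⁻¹ + ((ω - z₂.re) ^ 2 + z₂.im ^ 2)⁻¹) / 2) :=
    ((aux_integrable' z₁.re z₁.im h₁).add (aux_integrable' z₂.re z₂.im h₂)).div_const 2
  have hc : Continuous fun ω : ℝ => ((ω : ℂ) - z₁)⁻¹ * ((ω : ℂ) - z₂)⁻¹ :=
    ((Complex.continuous_ofReal.sub continuous_const).inv₀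
        (fun ω => ofReal_sub_ne z₁ h₁ ω)).mul
      ((Complex.continuous_ofReal.sub continuous_const).inv₀
        (fun ω => ofReal_sub_ne z₂ h₂ ω))
  exact hg.mono' hc.aestronglyMeasurable
    (Filter.Eventually.of_forall fun ω => norm_prod_inv_le z₁ z₂ ω)

lemma integral_diff_inv (z₁ z₂ : ℂ) (h₁ : 0 < z₁.im) (h₂ : z₂.im < 0) :
    ∫ ω : ℝ, (((ω : ℂ) - z₁)⁻¹ - ((ω : ℂ) - z₂)⁻¹) = 2 * Real.pi * Complex.I := by
  have hderiv : ∀ ω : ℝ, HasDerivAt (fun ω => Gaux z₁ ω - Gaux z₂ ω)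
      (((ω : ℂ) - z₁)⁻¹ - ((ω : ℂ) - z₂)⁻¹) ω := fun ω =>
    (Gaux_hasDerivAt z₁ (ne_of_gt h₁) ω).sub (Gaux_hasDerivAt z₂ (ne_of_lt h₂) ω)
  have hint : Integrable (fun ω : ℝ => ((ω : ℂ) - z₁)⁻¹ - ((ω : ℂ) - z₂)⁻¹) := by
    refine ((integrable_prod_inv z₁ z₂ (ne_of_gt h₁) (ne_of_lt h₂)).const_mul
      (z₁ - z₂)).congr (Filter.Eventually.of_forall fun ω => ?_)
    have hne₁ := ofReal_sub_ne z₁ (ne_of_gt h₁) ω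
    have hne₂ := ofReal_sub_ne z₂ (ne_of_lt h₂) ω
    field_simp
    ring
  have h := integral_of_hasDerivAt_of_tendsto hderiv hint
    (Fdiff_tendsto_atBot z₁ z₂ h₁ h₂) (Fdiff_tendsto_atTop z₁ z₂ h₁ h₂)
  rw [h]
  ring

lemma I_mul_sub_ne (a : ℂ) (ha : 0 < a.re) (ω : ℝ) : Complex.I * ω - a ≠ 0 := by
  intro h
  have h2 := congrArg Complex.re h
  simp [Complex.mul_re] at h2
  linarith

lemma cross_eq (a b : ℂ) (ha : 0 < a.re) (hb : 0 < b.re) (ω : ℝ) :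
    (starRingEnd ℂ (Complex.I * ω - a))⁻¹ * (Complex.I * ω - b)⁻¹ =
      ((ω : ℂ) - Complex.I * starRingEnd ℂ a)⁻¹ * ((ω : ℂ) - (-(Complex.I * b)))⁻¹ := by
  rw [← mul_inv, ← mul_inv]
  congr 1
  simp only [map_sub, _root_.map_mul, Complex.conj_I, Complex.conj_ofReal]
  have hI : Complex.I * Complex.I = -1 := Complex.I_mul_I
  linear_combination (starRingEnd ℂ a * b - (ω:ℂ)^2) * hI

lemma integrable_cross (a b : ℂ) (ha : 0 < a.re) (hb : 0 < b.re) :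
    Integrable (fun ω : ℝ =>
      (starRingEnd ℂ (Complex.I * ω - a))⁻¹ * (Complex.I * ω - b)⁻¹) := by
  have h1 : (Complex.I * starRingEnd ℂ a).im ≠ 0 := by
    simp [Complex.mul_im]
    exact ne_of_gt ha
  have h2 : (-(Complex.I * b)).im ≠ 0 := by
    simp [Complex.mul_im]
    exact ne_of_gt hb
  refine (integrable_prod_inv _ _ h1 h2).congr
    (Filter.Eventually.of_forall fun ω => (cross_eq a b ha hb ω).symm)

lemma integral_cross (a b : ℂ) (ha : 0 < a.re) (hb : 0 < b.re) :
    ∫ ω : ℝ, (starRingEnd ℂ (Complex.I * ω - a))⁻¹ * (Complex.I * ω - b)⁻¹ =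
      2 * Real.pi / (starRingEnd ℂ a + b) := by
  set z₁ : ℂ := Complex.I * starRingEnd ℂ a with hz₁
  set z₂ : ℂ := -(Complex.I * b) with hz₂
  have hz₁im : 0 < z₁.im := by simp [hz₁, Complex.mul_im]; exact ha
  have hz₂im : z₂.im < 0 := by simp [hz₂, Complex.mul_im]; exact hb
  have hab : starRingEnd ℂ a + b ≠ 0 := by
    intro h
    have := congrArg Complex.re h
    simp [Complex.add_re] at this
    linarith
  have hI : Complex.I * Complex.I = -1 := Complex.I_mul_I
  have hpt : ∀ ω : ℝ,
      (starRingEnd ℂ (Complex.I * ω - a))⁻¹ * (Complex.I * ω - b)⁻¹ =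
        ((starRingEnd ℂ a + b)⁻¹ * (-Complex.I)) *
          (((ω : ℂ) - z₁)⁻¹ - ((ω : ℂ) - z₂)⁻¹) := by
    intro ω
    have hne₁ : (ω : ℂ) - z₁ ≠ 0 := ofReal_sub_ne z₁ (ne_of_gt hz₁im) ω
    have hne₂ : (ω : ℂ) - z₂ ≠ 0 := ofReal_sub_ne z₂ (ne_of_lt hz₂im) ω
    rw [cross_eq a b ha hb ω]
    have key : ((ω : ℂ) - z₁)⁻¹ - ((ω : ℂ) - z₂)⁻¹ =
        (z₁ - z₂) * (((ω : ℂ) - z₁)⁻¹ * ((ω : ℂ) - z₂)⁻¹) := by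
      field_simp
      ring
    rw [key, show z₁ - z₂ = Complex.I * (starRingEnd ℂ a + b) by rw [hz₁, hz₂]; ring]
    have hc : ((starRingEnd ℂ a + b)⁻¹ * -Complex.I) *
        (Complex.I * (starRingEnd ℂ a + b)) = 1 := by
      have h1 : (starRingEnd ℂ a + b)⁻¹ * (starRingEnd ℂ a + b) = 1 :=
        inv_mul_cancel₀ hab
      linear_combination (-((starRingEnd ℂ a + b)⁻¹ * (starRingEnd ℂ a + b))) * hI + h1
    linear_combination (-(((ω : ℂ) - z₁)⁻¹ * ((ω : ℂ) - z₂)⁻¹)) * hc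
  rw [MeasureTheory.integral_congr_ae (Filter.Eventually.of_forall hpt),
    MeasureTheory.integral_const_mul, integral_diff_inv z₁ z₂ hz₁im hz₂im,
    div_eq_mul_inv]
  have h1 : (starRingEnd ℂ a + b)⁻¹ * (starRingEnd ℂ a + b) = 1 := inv_mul_cancel₀ hab
  linear_combination (-(2 * (Real.pi : ℂ) * (starRingEnd ℂ a + b)⁻¹)) * hI

open Matrix in
lemma trace_expand (n m : ℕ) (c : Fin n → ℂ) (A : Fin n → Matrix (Fin m) (Fin m) ℂ) :
    Matrix.trace ((∑ i, c i • A i)ᴴ * (∑ i, c i • A i)) =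
      ∑ i, ∑ j, (starRingEnd ℂ (c i) * c j) * Matrix.trace ((A i)ᴴ * A j) := by
  rw [conjTranspose_sum]
  simp only [conjTranspose_smul, Matrix.sum_mul, Matrix.mul_sum, Matrix.smul_mul,
    Matrix.mul_smul, trace_sum, trace_smul, smul_smul, smul_eq_mul]
  simp only [Finset.mul_sum]
  rw [Finset.sum_comm]
  simp only [starRingEnd_apply]
  exact Finset.sum_congr rfl fun i _ => Finset.sum_congr rfl fun j _ => by ring

end AuxPoleIntegral

/-- Matrix version of the pole quadratic form: for matrices `A_i` and `Re p_i > 0`,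
`(1/(2π)) ∫ ‖Σ_i (2 Re p_i/(iω - p_i)) A_i‖_F² dω
  = Σ_i Σ_j (4 Re p_i Re p_j/(conj p_i + p_j)) Tr(A_iᴴ A_j)`,
where `‖A‖_F² = Tr(Aᴴ A)`. -/
theorem antistable_matrix_sum_frobenius_norm_eval
    (n m : ℕ) (p : Fin n → ℂ) (hp : ∀ i, 0 < (p i).re)
    (A : Fin n → Matrix (Fin m) (Fin m) ℂ) :
    (1 / (2 * Real.pi) : ℂ) *
        ∫ ω : ℝ, Matrix.trace
          ((∑ i, ((2 * ((p i).re : ℂ)) / (Complex.I * (ω : ℂ) - p i)) • A i)ᴴ *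
            (∑ i, ((2 * ((p i).re : ℂ)) / (Complex.I * (ω : ℂ) - p i)) • A i))
      = ∑ i, ∑ j, (4 * ((p i).re : ℂ) * ((p j).re : ℂ) /
          (starRingEnd ℂ (p i) + p j)) * Matrix.trace ((A i)ᴴ * A j) := by
  have htr : ∀ ω : ℝ, Matrix.trace
      ((∑ i, ((2 * ((p i).re : ℂ)) / (Complex.I * (ω : ℂ) - p i)) • A i)ᴴ *
        (∑ i, ((2 * ((p i).re : ℂ)) / (Complex.I * (ω : ℂ) - p i)) • A i))
      = ∑ i, ∑ j, (starRingEnd ℂ ((2 * ((p i).re : ℂ)) / (Complex.I * (ω : ℂ) - p i)) *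
          ((2 * ((p j).re : ℂ)) / (Complex.I * (ω : ℂ) - p j))) *
        Matrix.trace ((A i)ᴴ * A j) := fun ω =>
    trace_expand n m (fun i => (2 * ((p i).re : ℂ)) / (Complex.I * (ω : ℂ) - p i)) A
  have hterm : ∀ (i j : Fin n) (ω : ℝ),
      (starRingEnd ℂ ((2 * ((p i).re : ℂ)) / (Complex.I * (ω : ℂ) - p i)) *
          ((2 * ((p j).re : ℂ)) / (Complex.I * (ω : ℂ) - p j))) *
        Matrix.trace ((A i)ᴴ * A j)
      = (4 * ((p i).re : ℂ) * ((p j).re : ℂ) * Matrix.trace ((A i)ᴴ * A j)) *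
        ((starRingEnd ℂ (Complex.I * (ω : ℂ) - p i))⁻¹ *
          (Complex.I * (ω : ℂ) - p j)⁻¹) := by
    intro i j ω
    simp only [div_eq_mul_inv, _root_.map_mul, map_inv₀, map_ofNat, Complex.conj_ofReal]
    ring
  have hint : ∀ i j : Fin n, MeasureTheory.Integrable (fun ω : ℝ =>
      (starRingEnd ℂ ((2 * ((p i).re : ℂ)) / (Complex.I * (ω : ℂ) - p i)) *
          ((2 * ((p j).re : ℂ)) / (Complex.I * (ω : ℂ) - p j))) *
        Matrix.trace ((A i)ᴴ * A j)) := by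
    intro i j
    refine ((integrable_cross (p i) (p j) (hp i) (hp j)).const_mul
      (4 * ((p i).re : ℂ) * ((p j).re : ℂ) * Matrix.trace ((A i)ᴴ * A j))).congr
      (Filter.Eventually.of_forall fun ω => (hterm i j ω).symm)
  rw [MeasureTheory.integral_congr_ae (Filter.Eventually.of_forall htr),
    MeasureTheory.integral_finset_sum _
      (fun i _ => MeasureTheory.integrable_finset_sum _ (fun j _ => hint i j))]
  have hIJ : ∀ i j : Fin n, (∫ ω : ℝ,
      (starRingEnd ℂ ((2 * ((p i).re : ℂ)) / (Complex.I * (ω : ℂ) - p i)) *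
          ((2 * ((p j).re : ℂ)) / (Complex.I * (ω : ℂ) - p j))) *
        Matrix.trace ((A i)ᴴ * A j))
      = (4 * ((p i).re : ℂ) * ((p j).re : ℂ) * Matrix.trace ((A i)ᴴ * A j)) *
        (2 * Real.pi / (starRingEnd ℂ (p i) + p j)) := by
    intro i j
    rw [MeasureTheory.integral_congr_ae (Filter.Eventually.of_forall (hterm i j)),
      MeasureTheory.integral_const_mul, integral_cross (p i) (p j) (hp i) (hp j)]
  have hπ : ((Real.pi : ℝ) : ℂ) ≠ 0 := by
    exact_mod_cast Real.pi_ne_zero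
  rw [Finset.mul_sum]
  refine Finset.sum_congr rfl fun i _ => ?_
  rw [MeasureTheory.integral_finset_sum _ (fun j _ => hint i j), Finset.mul_sum]
  refine Finset.sum_congr rfl fun j _ => ?_
  rw [hIJ i j]
  have hd : starRingEnd ℂ (p i) + p j ≠ 0 := by
    intro h
    have := congrArg Complex.re h
    simp [Complex.add_re] at this
    have hpi := hp i; have hpj := hp j
    linarith
  field_simp
end

section
/- Let z_1, …, z_n ∈ ℂ be distinct with Re z_i > 0, and let Y be a rational function over ℂ that is proper (numerator degree at most denominator degree) and has no poles in the closed right half-plane {s : Re s ≥ 0}. Then there exists a rational function T, proper and with no poles in the closed right half-plane, such that as rational functions ∏_{k=1}^n ((s + conj(z_k))/(s − z_k)) · Y(s) = T(s) + Σ_{i=1}^n c_i/(s − z_i), where c_i = 2 Re z_i · (∏_{k≠i} (z_i + conj(z_k))/(z_i − z_k)) · Y(z_i). (Scalar form of Lemma 1: partial-fraction splitting of the inverse Blaschke product times a stable function into a stable part plus explicit antistable residue terms.) -/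
open Polynomial

/-- Scalar form of Lemma 1: partial-fraction splitting of the inverse Blaschke
product times a stable proper rational function `Y` into a stable proper part `T`
plus explicit antistable residue terms:
`∏_k ((s + conj z_k)/(s - z_k)) Y(s) = T(s) + Σ_i c_i/(s - z_i)` with
`c_i = 2 Re z_i (∏_{k≠i} (z_i + conj z_k)/(z_i - z_k)) Y(z_i)`. -/
theorem inverse_blaschke_partial_fraction_scalar
    (n : ℕ) (z : Fin n → ℂ) (hz : ∀ i, 0 < (z i).re)
    (hdist : Function.Injective z)
    (Y : RatFunc ℂ)
    (hY_proper : Y.num.degree ≤ Y.denom.degree)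
    (hY_stable : ∀ x : ℂ, Polynomial.eval x Y.denom = 0 → x.re < 0) :
    ∃ T : RatFunc ℂ,
      T.num.degree ≤ T.denom.degree ∧
      (∀ x : ℂ, Polynomial.eval x T.denom = 0 → x.re < 0) ∧
      (∏ k, (RatFunc.X + RatFunc.C (starRingEnd ℂ (z k))) /
          (RatFunc.X - RatFunc.C (z k))) * Y
        = T + ∑ i, RatFunc.C ((2 * ((z i).re : ℂ)) *
            (∏ k ∈ Finset.univ.erase i,
              (z i + starRingEnd ℂ (z k)) / (z i - z k)) *
            RatFunc.eval (RingHom.id ℂ) (z i) Y) /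
          (RatFunc.X - RatFunc.C (z i)) := by
  classical
  set c : Fin n → ℂ := fun i => (2 * ((z i).re : ℂ)) *
      (∏ k ∈ Finset.univ.erase i, (z i + starRingEnd ℂ (z k)) / (z i - z k)) *
      RatFunc.eval (RingHom.id ℂ) (z i) Y with hc
  set D : Polynomial ℂ := ∏ k, (X - C (z k)) with hD
  set Nn : Polynomial ℂ := ∏ k, (X + C (starRingEnd ℂ (z k))) with hNn
  set E : Fin n → Polynomial ℂ :=
    fun i => ∏ k ∈ Finset.univ.erase i, (X - C (z k)) with hE
  set P : Polynomial ℂ := Nn * Y.num - ∑ i, C (c i) * E i * Y.denom with hP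
  set Q : Polynomial ℂ := D * Y.denom with hQ
  have hYd : ∀ i, Y.denom.eval (z i) ≠ 0 := fun i h =>
    absurd (hY_stable _ h) (not_lt.2 (hz i).le)
  have hDne : D ≠ 0 := by
    rw [hD]
    exact Finset.prod_ne_zero_iff.2 fun k _ => X_sub_C_ne_zero _
  have hQne : Q ≠ 0 := mul_ne_zero hDne Y.denom_ne_zero
  have hEne : ∀ i, E i ≠ 0 := fun i =>
    Finset.prod_ne_zero_iff.2 fun k _ => X_sub_C_ne_zero _
  have hEeval : ∀ i, (E i).eval (z i) = ∏ k ∈ Finset.univ.erase i, (z i - z k) := by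
    intro i; rw [hE]; simp [eval_prod]
  have hEne0 : ∀ i, (∏ k ∈ Finset.univ.erase i, (z i - z k)) ≠ 0 := by
    intro i
    refine Finset.prod_ne_zero_iff.2 fun k hk => sub_ne_zero.2 fun h => ?_
    exact (Finset.mem_erase.1 hk).1 (hdist h.symm)
  -- residues vanish
  have hPz : ∀ i, P.eval (z i) = 0 := by
    intro i
    have hsum : (∑ j, C (c j) * E j * Y.denom).eval (z i)
        = c i * (E i).eval (z i) * Y.denom.eval (z i) := by
      rw [eval_finset_sum]
      rw [Finset.sum_eq_single i]
      · simp
      · intro j _ hji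
        have : (E j).eval (z i) = 0 := by
          rw [hE]
          simp only [eval_prod]
          exact Finset.prod_eq_zero (Finset.mem_erase.2 ⟨hji.symm, Finset.mem_univ i⟩) (by simp)
        simp [this]
      · simp
    have hNeval : Nn.eval (z i)
        = (z i + starRingEnd ℂ (z i)) * ∏ k ∈ Finset.univ.erase i, (z i + starRingEnd ℂ (z k)) := by
      rw [hNn, eval_prod]
      simp only [eval_add, eval_X, eval_C]
      exact (Finset.mul_prod_erase _ _ (Finset.mem_univ i)).symm
    have hYeval : RatFunc.eval (RingHom.id ℂ) (z i) Y
        = Y.num.eval (z i) / Y.denom.eval (z i) := by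
      rfl
    have h2re : (2 * ((z i).re : ℂ)) = z i + starRingEnd ℂ (z i) := by
      rw [Complex.add_conj]; push_cast; ring
    have hprodq : (∏ k ∈ Finset.univ.erase i, (z i + starRingEnd ℂ (z k)) / (z i - z k))
        = (∏ k ∈ Finset.univ.erase i, (z i + starRingEnd ℂ (z k)))
          / ∏ k ∈ Finset.univ.erase i, (z i - z k) := Finset.prod_div_distrib _ _
    have hkey : c i * (∏ k ∈ Finset.univ.erase i, (z i - z k)) * Y.denom.eval (z i)
        = Nn.eval (z i) * Y.num.eval (z i) := by
      simp only [hc]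
      rw [hYeval, h2re, hprodq, hNeval]
      field_simp [hEne0 i, hYd i]
    rw [hP, eval_sub, hsum, hEeval, hkey, eval_mul, sub_self]
  have hDi : ∀ i, (X - C (z i)) * E i = D := fun i =>
    Finset.mul_prod_erase Finset.univ (fun k => X - C (z k)) (Finset.mem_univ i)
  have hQi : ∀ i, (X - C (z i)) * (E i * Y.denom) = Q := by
    intro i
    rw [hQ, ← hDi i]; ring
  have hNnne : Nn ≠ 0 :=
    (monic_prod_of_monic _ _ fun k _ => monic_X_add_C _).ne_zero
  set T : RatFunc ℂ := algebraMap ℂ[X] (RatFunc ℂ) P / algebraMap ℂ[X] (RatFunc ℂ) Q with hT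
  -- degree bounds
  have hdegD : D.degree = (n : WithBot ℕ) := by
    rw [hD, degree_prod]
    simp [degree_X_sub_C]
  have hdegNn : Nn.degree = (n : WithBot ℕ) := by
    rw [hNn, degree_prod]
    simp [degree_X_add_C]
  have hdegE : ∀ i, (E i).degree ≤ (n : WithBot ℕ) := by
    intro i
    rw [hE]
    simp only [degree_prod, degree_X_sub_C]
    rw [Finset.sum_const, Finset.card_erase_of_mem (Finset.mem_univ i)]
    simp only [Finset.card_univ, Fintype.card_fin, nsmul_eq_mul, mul_one]
    exact_mod_cast Nat.cast_le.2 (Nat.sub_le n 1)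
  have hdegQ : Q.degree = (n : WithBot ℕ) + Y.denom.degree := by
    rw [hQ, degree_mul, hdegD]
  have hdegP : P.degree ≤ Q.degree := by
    rw [hP]
    refine (degree_sub_le _ _).trans (max_le ?_ ?_)
    · rw [degree_mul, hdegNn, hdegQ]
      exact add_le_add_right hY_proper _
    · refine (degree_sum_le _ _).trans (Finset.sup_le fun i _ => ?_)
      rw [degree_mul, hdegQ]
      refine add_le_add_left ?_ _
      calc (C (c i) * E i).degree ≤ (C (c i)).degree + (E i).degree := degree_mul_le _ _
        _ ≤ 0 + (n : WithBot ℕ) := add_le_add (degree_C_le) (hdegE i)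
        _ = (n : WithBot ℕ) := zero_add _
  refine ⟨T, ?_, ?_, ?_⟩
  · -- properness
    by_cases hP0 : P = 0
    · have : T = 0 := by rw [hT, hP0, map_zero, zero_div]
      simp [this]
    · obtain ⟨u, hu⟩ := RatFunc.denom_div_dvd P Q
      rw [← hT] at hu
      have hu0 : u ≠ 0 := fun h => hQne (by rw [hu, h, mul_zero])
      have hTQ : T.num * Q = P * T.denom := by
        have h1 : algebraMap ℂ[X] (RatFunc ℂ) T.num / algebraMap ℂ[X] (RatFunc ℂ) T.denom
            = algebraMap ℂ[X] (RatFunc ℂ) P / algebraMap ℂ[X] (RatFunc ℂ) Q := by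
          rw [RatFunc.num_div_denom, hT]
        rw [div_eq_div_iff (RatFunc.algebraMap_ne_zero (RatFunc.denom_ne_zero T))
          (RatFunc.algebraMap_ne_zero hQne), ← map_mul, ← map_mul] at h1
        exact RatFunc.algebraMap_injective ℂ h1
      have hnum_u : T.num * u = P := by
        have h2 : (T.num * u) * T.denom = P * T.denom := by
          rw [← hTQ, hu]; ring
        exact mul_right_cancel₀ (RatFunc.denom_ne_zero T) h2
      by_cases hTn0 : T.num = 0
      · simp [hTn0]
      · have hPne : P ≠ 0 := hP0
        have h3 : T.num.natDegree + u.natDegree ≤ T.denom.natDegree + u.natDegree := by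
          have hPQ : P.natDegree ≤ Q.natDegree := natDegree_le_natDegree hdegP
          rw [← hnum_u, natDegree_mul hTn0 hu0] at hPQ
          rw [hu, natDegree_mul (RatFunc.denom_ne_zero T) hu0] at hPQ
          exact hPQ
        have h4 : T.num.natDegree ≤ T.denom.natDegree := by omega
        rw [degree_eq_natDegree hTn0, degree_eq_natDegree (RatFunc.denom_ne_zero T)]
        exact_mod_cast h4
  · -- stability
    intro x hx
    by_contra hre
    push_neg at hre
    have hxQ : Q.eval x = 0 := by
      obtain ⟨u, hu⟩ := RatFunc.denom_div_dvd P Q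
      rw [← hT] at hu
      rw [hu, eval_mul, hx, zero_mul]
    rw [hQ, eval_mul, mul_eq_zero] at hxQ
    rcases hxQ with hxD | hxY
    · rw [hD, eval_prod, Finset.prod_eq_zero_iff] at hxD
      obtain ⟨i, -, hxi⟩ := hxD
      rw [eval_sub, eval_X, eval_C, sub_eq_zero] at hxi
      subst hxi
      obtain ⟨Pi, hPifac⟩ := dvd_iff_isRoot.2 (hPz i)
      have hTi : T = algebraMap ℂ[X] (RatFunc ℂ) Pi / algebraMap ℂ[X] (RatFunc ℂ) (E i * Y.denom) := by
        rw [hT, ← hQi i, hPifac, map_mul, map_mul,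
          mul_div_mul_left _ _ (RatFunc.algebraMap_ne_zero (X_sub_C_ne_zero (z i)))]
      have hdvd2 : T.denom ∣ E i * Y.denom := by
        rw [hTi]; exact RatFunc.denom_div_dvd Pi (E i * Y.denom)
      obtain ⟨v, hv⟩ := hdvd2
      have hzero : (E i * Y.denom).eval (z i) = 0 := by
        rw [hv, eval_mul, hx, zero_mul]
      rw [eval_mul, hEeval i] at hzero
      exact mul_ne_zero (hEne0 i) (hYd i) hzero
    · exact absurd (hY_stable x hxY) (not_lt.2 hre)
  · -- the equation
    have hprod : (∏ k, (RatFunc.X + RatFunc.C (starRingEnd ℂ (z k))) /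
          (RatFunc.X - RatFunc.C (z k))) * Y
        = algebraMap ℂ[X] (RatFunc ℂ) (Nn * Y.num) / algebraMap ℂ[X] (RatFunc ℂ) Q := by
      conv_lhs => rw [← Y.num_div_denom]
      simp only [← RatFunc.algebraMap_X, ← RatFunc.algebraMap_C, ← map_add, ← map_sub]
      rw [Finset.prod_div_distrib, ← map_prod, ← map_prod, ← hNn, ← hD,
        div_mul_div_comm, ← map_mul, ← map_mul, ← hQ]
    have hterm : ∀ i, RatFunc.C (c i) / (RatFunc.X - RatFunc.C (z i))
        = algebraMap ℂ[X] (RatFunc ℂ) (C (c i) * E i * Y.denom) / algebraMap ℂ[X] (RatFunc ℂ) Q := by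
      intro i
      rw [← RatFunc.algebraMap_C (c i), ← RatFunc.algebraMap_X, ← RatFunc.algebraMap_C (z i),
        ← map_sub, div_eq_div_iff (RatFunc.algebraMap_ne_zero (X_sub_C_ne_zero (z i)))
          (RatFunc.algebraMap_ne_zero hQne), ← map_mul, ← map_mul]
      congr 1
      rw [← hQi i]; ring
    rw [hprod]
    calc algebraMap ℂ[X] (RatFunc ℂ) (Nn * Y.num) / algebraMap ℂ[X] (RatFunc ℂ) Q
        = (algebraMap ℂ[X] (RatFunc ℂ) P + algebraMap ℂ[X] (RatFunc ℂ)
            (∑ i, C (c i) * E i * Y.denom)) / algebraMap ℂ[X] (RatFunc ℂ) Q := by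
          rw [← map_add, hP, sub_add_cancel]
      _ = T + ∑ i, RatFunc.C (c i) / (RatFunc.X - RatFunc.C (z i)) := by
          rw [add_div, hT, map_sum, Finset.sum_div]
          congr 1
          exact Finset.sum_congr rfl fun i _ => (hterm i).symm
end
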